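/- arXiv:1509.06150 — 2 statements merged into one kernel-verified Lean document; each statement's English description precedes it below -/
import Mathlib

section
/- Let W = (𝒫, n) be a well-defined Wilson loop diagram with 𝒫 nonempty and V_𝒫 = Fin n, and let M be its matroid M(W). Then M is not connected if and only if there exists a partition 𝒫 = P₁ ⊔ P₂ into two nonempty sets such that V_{P₁} ∩ V_{P₂} = ∅ (equivalently, such that F(P₁) and F(P₂) partition Fin n). -/
open Matroid Set

/-- The support of a propagator: its two endpoints and their cyclic successors. -/
def Vp (n : ℕ) [NeZero n] (p : Fin n × Fin n) : Set (Fin n) :=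
  {p.1, p.1 + 1, p.2, p.2 + 1}

/-- The support of a set of propagators. -/
def VP (n : ℕ) [NeZero n] (P : Set (Fin n × Fin n)) : Set (Fin n) :=
  ⋃ p ∈ P, Vp n p

/-- `propsOf n Ps S` is `Prop(S)`: the propagators of `Ps` whose support meets `S`. -/
def propsOf (n : ℕ) [NeZero n] (Ps : Set (Fin n × Fin n)) (S : Set (Fin n)) :
    Set (Fin n × Fin n) :=
  {p ∈ Ps | (Vp n p ∩ S).Nonempty}

/-- A Wilson loop diagram `(Ps, n)` is well defined if `|V_P| ≥ |P| + 3`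
for every nonempty `P ⊆ Ps`. -/
def WellDefinedWLD (n : ℕ) [NeZero n] (Ps : Set (Fin n × Fin n)) : Prop :=
  ∀ P ⊆ Ps, P.Nonempty → P.ncard + 3 ≤ (VP n P).ncard
/-- A circuit of a matroid: a minimal dependent set. -/
def Matroid.IsCircuitOf {α : Type*} (M : Matroid α) (C : Set α) : Prop :=
  M.Dep C ∧ ∀ D ⊂ C, ¬ M.Dep D

/-- A union of circuits (a cyclic set) of a matroid. -/
def Matroid.UnionOfCircuits {α : Type*} (M : Matroid α) (C : Set α) : Prop :=
  ∃ 𝒞 : Set (Set α), (∀ D ∈ 𝒞, M.IsCircuitOf D) ∧ C = ⋃₀ 𝒞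

/-- A matroid is connected if its ground set is nonempty and any two elements of the
ground set are equal or lie on a common circuit. -/
def Matroid.Conn {α : Type*} (M : Matroid α) : Prop :=
  M.E.Nonempty ∧ ∀ x ∈ M.E, ∀ y ∈ M.E, x = y ∨ ∃ C, M.IsCircuitOf C ∧ x ∈ C ∧ y ∈ C

/-- The rank of a set in a matroid: the maximal size of an independent subset. -/
noncomputable def Matroid.rk' {α : Type*} (M : Matroid α) (X : Set α) : ℕ :=
  sSup (Set.ncard '' {I | M.Indep I ∧ I ⊆ X})

/-- Contraction of a matroid by a set, defined via duality. -/
def Matroid.contractBy {α : Type*} (M : Matroid α) (C : Set α) : Matroid α :=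
  (M✶ ↾ (M.E \ C))✶

/-- The propagator flat `F(P)`: vertices supporting only propagators in `P`. -/
def FP (n : ℕ) [NeZero n] (Ps P : Set (Fin n × Fin n)) : Set (Fin n) :=
  VP n P \ VP n (Ps \ P)

set_option linter.unusedSectionVars false

section Circuits

variable {α : Type*} [Finite α] {M : Matroid α} {C C₁ C₂ C₃ D : Set α} {e f g x y : α}

lemma Matroid.IsCircuitOf.dep (h : M.IsCircuitOf C) : M.Dep C := h.1

lemma Matroid.IsCircuitOf.subset_ground (h : M.IsCircuitOf C) : C ⊆ M.E :=
  h.1.subset_ground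

lemma Matroid.IsCircuitOf.ssubset_indep (h : M.IsCircuitOf C) (hD : D ⊂ C) : M.Indep D := by
  rw [← Matroid.not_dep_iff (hD.subset.trans h.subset_ground)]
  exact h.2 D hD

lemma Matroid.IsCircuitOf.not_indep (h : M.IsCircuitOf C) : ¬ M.Indep C := h.1.1

lemma exists_circuitOf_subset (hD : M.Dep D) : ∃ C, C ⊆ D ∧ M.IsCircuitOf C := by
  classical
  have key : ∀ k (D : Set α), D.ncard ≤ k → M.Dep D → ∃ C, C ⊆ D ∧ M.IsCircuitOf C := by
    intro k
    induction k with
    | zero =>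
      intro D hcard hdep
      have : D = ∅ := by
        rw [← Set.ncard_eq_zero (Set.toFinite D)]; omega
      exact absurd (this ▸ hdep) (by simp [Matroid.Dep])
    | succ k IH =>
      intro D hcard hdep
      by_cases h : ∀ D' ⊂ D, ¬ M.Dep D'
      · exact ⟨D, subset_rfl, hdep, h⟩
      · push_neg at h
        obtain ⟨D', hss, hdep'⟩ := h
        have : D'.ncard < D.ncard := Set.ncard_lt_ncard hss (Set.toFinite D)
        obtain ⟨C, hC1, hC2⟩ := IH D' (by omega) hdep'
        exact ⟨C, hC1.trans hss.subset, hC2⟩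
  exact key D.ncard D le_rfl hD

/-- Weak circuit elimination. -/
lemma circuit_weak_elim (h1 : M.IsCircuitOf C₁) (h2 : M.IsCircuitOf C₂) (hne : C₁ ≠ C₂)
    (he : e ∈ C₁ ∩ C₂) : M.Dep ((C₁ ∪ C₂) \ {e}) := by
  classical
  set X := C₁ ∪ C₂ with hX
  have hXE : X ⊆ M.E := union_subset h1.subset_ground h2.subset_ground
  by_contra hdep
  have hI : M.Indep (X \ {e}) := by
    rw [← Matroid.not_dep_iff (diff_subset.trans hXE)]; exact hdep
  -- C₂ \ C₁ is nonempty
  have hf : (C₂ \ C₁).Nonempty := by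
    rw [Set.nonempty_iff_ne_empty]
    intro hemp
    have hsub : C₂ ⊆ C₁ := by
      intro a ha
      by_contra hac
      exact (Set.eq_empty_iff_forall_notMem.mp hemp a) ⟨ha, hac⟩
    have : C₂ ⊂ C₁ := hsub.ssubset_of_ne (fun h => hne h.symm)
    exact h2.not_indep (h1.ssubset_indep this)
  obtain ⟨f, hfC₂, hfC₁⟩ := hf
  have hC₂f : M.Indep (C₂ \ {f}) :=
    h2.ssubset_indep (Set.sdiff_singleton_ssubset.mpr hfC₂)
  obtain ⟨J, hJ, hJsub⟩ := hC₂f.subset_isBasis_of_subset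
    (Set.diff_subset.trans (subset_union_right : C₂ ⊆ C₁ ∪ C₂)) hXE
  obtain ⟨J', hJ', hJ'sub⟩ := hI.subset_isBasis_of_subset diff_subset hXE
  have hcard : J'.encard = J.encard := hJ'.encard_eq_encard hJ
  -- f ∉ J
  have hfJ : f ∉ J := by
    intro hfJ
    have : C₂ ⊆ J := by
      intro a ha
      by_cases haf : a = f
      · exact haf ▸ hfJ
      · exact hJsub ⟨ha, haf⟩
    exact h2.not_indep (hJ.indep.subset this)
  -- some g ∈ C₁ \ J
  have hg : (C₁ \ J).Nonempty := by
    rw [Set.nonempty_iff_ne_empty]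
    intro hemp
    have hsub : C₁ ⊆ J := by
      intro a ha; by_contra hac
      exact (Set.eq_empty_iff_forall_notMem.mp hemp a) ⟨ha, hac⟩
    exact h1.not_indep (hJ.indep.subset hsub)
  obtain ⟨g, hgC₁, hgJ⟩ := hg
  have hgf : g ≠ f := fun h => hfC₁ (h ▸ hgC₁)
  -- J ⊆ X \ {f, g}
  have hJX : J ⊆ (X \ {f}) \ {g} := by
    intro a ha
    exact ⟨⟨hJ.subset ha, fun h => hfJ (by rwa [Set.mem_singleton_iff.mp h] at ha)⟩,
      fun h => hgJ (by rwa [Set.mem_singleton_iff.mp h] at ha)⟩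
  -- cardinalities
  have hfin : X.Finite := Set.toFinite X
  have heX : e ∈ X := Or.inl he.1
  have hfX : f ∈ X := Or.inr hfC₂
  have hgX : g ∈ X := Or.inl hgC₁
  have h1' : (X \ {e}).ncard = X.ncard - 1 := Set.ncard_diff_singleton_of_mem heX
  have hgXf : g ∈ X \ {f} := ⟨hgX, by simp [hgf]⟩
  have h2' : ((X \ {f}) \ {g}).ncard = X.ncard - 2 := by
    rw [Set.ncard_diff_singleton_of_mem hgXf, Set.ncard_diff_singleton_of_mem hfX]
    omega
  have hle1 : (X \ {e}).ncard ≤ J'.ncard := Set.ncard_le_ncard hJ'sub (Set.toFinite _)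
  have hle2 : J.ncard ≤ ((X \ {f}) \ {g}).ncard := Set.ncard_le_ncard hJX (Set.toFinite _)
  have hJJ' : J'.ncard = J.ncard := by
    rw [Set.ncard_def, Set.ncard_def, hcard]
  have hX2 : 2 ≤ X.ncard := by
    have : ({f, g} : Set α).ncard ≤ X.ncard :=
      Set.ncard_le_ncard (by rintro a (rfl | rfl); exacts [hfX, hgX]) hfin
    rwa [Set.ncard_pair (Ne.symm hgf)] at this
  omega

/-- Strong circuit elimination. -/
lemma circuit_strong_elim (h1 : M.IsCircuitOf C₁) (h2 : M.IsCircuitOf C₂)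
    (he : e ∈ C₁ ∩ C₂) (hf : f ∈ C₁ \ C₂) :
    ∃ C₃, M.IsCircuitOf C₃ ∧ f ∈ C₃ ∧ C₃ ⊆ (C₁ ∪ C₂) \ {e} := by
  classical
  have key : ∀ k (C₁ C₂ : Set α) (e f : α), (C₁ ∪ C₂).ncard ≤ k →
      M.IsCircuitOf C₁ → M.IsCircuitOf C₂ → e ∈ C₁ ∩ C₂ → f ∈ C₁ \ C₂ →
      ∃ C₃, M.IsCircuitOf C₃ ∧ f ∈ C₃ ∧ C₃ ⊆ (C₁ ∪ C₂) \ {e} := by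
    intro k
    induction k with
    | zero =>
      intro C₁ C₂ e f hcard _ _ he _
      have : e ∈ C₁ ∪ C₂ := Or.inl he.1
      have : 0 < (C₁ ∪ C₂).ncard := (Set.ncard_pos (Set.toFinite _)).mpr ⟨e, this⟩
      omega
    | succ k IH =>
      intro C₁ C₂ e f hcard h1 h2 he hf
      have hne : C₁ ≠ C₂ := fun h => hf.2 (h ▸ hf.1)
      obtain ⟨D, hDsub, hD⟩ := exists_circuitOf_subset (circuit_weak_elim h1 h2 hne he)
      by_cases hfD : f ∈ D
      · exact ⟨D, hD, hfD, hDsub⟩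
      -- D ⊄ C₁
      have heD : e ∉ D := fun h => (hDsub h).2 rfl
      have hDC₁ : ¬ D ⊆ C₁ := by
        intro hsub
        have : D ⊂ C₁ := hsub.ssubset_of_ne (fun h => heD (h ▸ he.1))
        exact hD.not_indep (h1.ssubset_indep this)
      obtain ⟨g, hgD, hgC₁⟩ := Set.not_subset.mp hDC₁
      have hgC₂ : g ∈ C₂ := ((hDsub hgD).1).resolve_left hgC₁
      -- first IH application : pair (C₂, D), common g, e ∈ C₂ \ D
      have hu1 : C₂ ∪ D ⊆ C₁ ∪ C₂ := union_subset subset_union_right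
        (hDsub.trans diff_subset)
      have hfC₂D : f ∉ C₂ ∪ D := fun h => h.elim (fun h' => hf.2 h') hfD
      have hss1 : C₂ ∪ D ⊂ C₁ ∪ C₂ := hu1.ssubset_of_ne
        (fun h => hfC₂D (h ▸ Or.inl hf.1))
      have hlt1 : (C₂ ∪ D).ncard < (C₁ ∪ C₂).ncard := Set.ncard_lt_ncard hss1 (Set.toFinite _)
      obtain ⟨C₄, hC₄, heC₄, hC₄sub⟩ := IH C₂ D g e (by omega) h2 hD ⟨hgC₂, hgD⟩
        ⟨he.2, heD⟩
      -- second IH application : pair (C₁, C₄), common e, f ∈ C₁ \ C₄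
      have hC₄sub' : C₄ ⊆ C₁ ∪ C₂ := hC₄sub.trans (diff_subset.trans hu1)
      have hgC₄ : g ∉ C₄ := fun h => (hC₄sub h).2 rfl
      have hu2 : C₁ ∪ C₄ ⊆ C₁ ∪ C₂ := union_subset subset_union_left hC₄sub'
      have hgu2 : g ∉ C₁ ∪ C₄ := fun h => h.elim hgC₁ hgC₄
      have hss2 : C₁ ∪ C₄ ⊂ C₁ ∪ C₂ := hu2.ssubset_of_ne
        (fun h => hgu2 (h ▸ Or.inr hgC₂))
      have hlt2 : (C₁ ∪ C₄).ncard < (C₁ ∪ C₂).ncard := Set.ncard_lt_ncard hss2 (Set.toFinite _)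
      have hfC₄ : f ∉ C₄ := fun h => hfC₂D (hC₄sub.trans diff_subset h)
      obtain ⟨C₃, hC₃, hfC₃, hC₃sub⟩ := IH C₁ C₄ e f (by omega) h1 hC₄ ⟨he.1, heC₄⟩
        ⟨hf.1, hfC₄⟩
      exact ⟨C₃, hC₃, hfC₃, hC₃sub.trans (Set.diff_subset_diff_left hu2)⟩
  exact key (C₁ ∪ C₂).ncard C₁ C₂ e f le_rfl h1 h2 he hf

/-- Transitivity: if two circuits intersect, any element of one and any element of the
other lie on a common circuit. -/
lemma circuit_trans (h1 : M.IsCircuitOf C₁) (h2 : M.IsCircuitOf C₂)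
    (hx : x ∈ C₁) (hy : y ∈ C₂) (hi : (C₁ ∩ C₂).Nonempty) :
    ∃ C, M.IsCircuitOf C ∧ x ∈ C ∧ y ∈ C := by
  classical
  by_contra hcon
  push_neg at hcon
  -- the set of cardinalities of unions of witnessing pairs
  set K : Set ℕ := {k | ∃ D₁ D₂ : Set α, M.IsCircuitOf D₁ ∧ M.IsCircuitOf D₂ ∧
    x ∈ D₁ ∧ y ∈ D₂ ∧ (D₁ ∩ D₂).Nonempty ∧ (D₁ ∪ D₂).ncard = k} with hK
  have hKne : K.Nonempty := ⟨(C₁ ∪ C₂).ncard, C₁, C₂, h1, h2, hx, hy, hi, rfl⟩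
  obtain ⟨D₁, D₂, g1, g2, hx1, hy2, hi', hmin⟩ := Nat.sInf_mem hKne
  have hmin' : ∀ k ∈ K, sInf K ≤ k := fun k hk => Nat.sInf_le hk
  -- y ∉ D₁, x ∉ D₂
  have hyD₁ : y ∉ D₁ := fun h => (hcon D₁ g1) hx1 h
  have hxD₂ : x ∉ D₂ := fun h => (hcon D₂ g2) h hy2
  obtain ⟨e, heD⟩ := hi'
  -- C₃ : circuit with x, inside (D₁ ∪ D₂) \ {e}
  obtain ⟨E₃, g3, hxE₃, hE₃sub⟩ := circuit_strong_elim g1 g2 heD ⟨hx1, hxD₂⟩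
  have hyE₃ : y ∉ E₃ := fun h => (hcon E₃ g3) hxE₃ h
  have heE₃ : e ∉ E₃ := fun h => (hE₃sub h).2 rfl
  have hE₃D1 : ¬ E₃ ⊆ D₁ := by
    intro hsub
    exact g3.not_indep (g1.ssubset_indep (hsub.ssubset_of_ne
      (fun h => heE₃ (h ▸ heD.1))))
  obtain ⟨g, hgE₃, hgD₁⟩ := Set.not_subset.mp hE₃D1
  have hgD₂ : g ∈ D₂ := ((hE₃sub hgE₃).1).resolve_left hgD₁
  -- minimality : E₃ ∪ D₂ = D₁ ∪ D₂
  have hsub1 : E₃ ∪ D₂ ⊆ D₁ ∪ D₂ := union_subset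
    (hE₃sub.trans diff_subset) subset_union_right
  have hEq1 : E₃ ∪ D₂ = D₁ ∪ D₂ := by
    apply Set.eq_of_subset_of_ncard_le hsub1 _ (Set.toFinite _)
    rw [hmin]
    exact hmin' _ ⟨E₃, D₂, g3, g2, hxE₃, hy2, ⟨g, hgE₃, hgD₂⟩, rfl⟩
  -- C₄ : circuit with y, inside (D₁ ∪ D₂) \ {e}
  obtain ⟨E₄, g4, hyE₄, hE₄sub⟩ := circuit_strong_elim g2 g1 ⟨heD.2, heD.1⟩ ⟨hy2, hyD₁⟩
  have hE₄sub : E₄ ⊆ (D₁ ∪ D₂) \ {e} := by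
    rwa [Set.union_comm D₂ D₁] at hE₄sub
  have hxE₄ : x ∉ E₄ := fun h => (hcon E₄ g4) h hyE₄
  have heE₄ : e ∉ E₄ := fun h => (hE₄sub h).2 rfl
  have hE₄D2 : ¬ E₄ ⊆ D₂ := by
    intro hsub
    exact g4.not_indep (g2.ssubset_indep (hsub.ssubset_of_ne
      (fun h => heE₄ (h ▸ heD.2))))
  obtain ⟨g', hg'E₄, hg'D₂⟩ := Set.not_subset.mp hE₄D2
  have hg'D₁ : g' ∈ D₁ := ((hE₄sub hg'E₄).1).resolve_right hg'D₂
  have hsub2 : E₄ ∪ D₁ ⊆ D₁ ∪ D₂ := union_subset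
    (hE₄sub.trans diff_subset) subset_union_left
  have hEq2 : E₄ ∪ D₁ = D₁ ∪ D₂ := by
    apply Set.eq_of_subset_of_ncard_le hsub2 _ (Set.toFinite _)
    rw [hmin]
    exact hmin' _ ⟨D₁, E₄, g1, g4, hx1, hyE₄, ⟨g', hg'D₁, hg'E₄⟩, (Set.union_comm _ _ ▸ rfl)⟩
  -- g ∈ E₄ : since g ∈ D₂ \ D₁ ⊆ E₄
  have hgE₄ : g ∈ E₄ := by
    have : g ∈ E₄ ∪ D₁ := hEq2 ▸ (Or.inr hgD₂)
    exact this.resolve_right hgD₁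
  -- final contradiction : pair (E₃, E₄)
  have hsub3 : E₃ ∪ E₄ ⊆ (D₁ ∪ D₂) \ {e} := union_subset hE₃sub hE₄sub
  have hlt : (E₃ ∪ E₄).ncard < (D₁ ∪ D₂).ncard := by
    calc (E₃ ∪ E₄).ncard ≤ ((D₁ ∪ D₂) \ {e}).ncard :=
          Set.ncard_le_ncard hsub3 (Set.toFinite _)
      _ < (D₁ ∪ D₂).ncard := by
          have heU : e ∈ D₁ ∪ D₂ := Or.inl heD.1
          rw [Set.ncard_diff_singleton_of_mem heU]
          have : 0 < (D₁ ∪ D₂).ncard := (Set.ncard_pos (Set.toFinite _)).mpr ⟨e, heU⟩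
          omega
  have : (E₃ ∪ E₄).ncard ∈ K := ⟨E₃, E₄, g3, g4, hxE₃, hyE₄, ⟨g, hgE₃, hgE₄⟩, rfl⟩
  have := hmin' _ this
  omega

end Circuits

section WLDBasic

variable {n : ℕ} [NeZero n] {Ps : Set (Fin n × Fin n)}

lemma fst_mem_Vp (p : Fin n × Fin n) : p.1 ∈ Vp n p := Or.inl rfl

lemma mem_VP {P : Set (Fin n × Fin n)} {v : Fin n} :
    v ∈ VP n P ↔ ∃ p ∈ P, v ∈ Vp n p := by
  simp [VP]

lemma VP_union (P₁ P₂ : Set (Fin n × Fin n)) : VP n (P₁ ∪ P₂) = VP n P₁ ∪ VP n P₂ := by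
  simp only [VP]
  exact Set.biUnion_union P₁ P₂ _

lemma mem_propsOf {p : Fin n × Fin n} {S : Set (Fin n)} :
    p ∈ propsOf n Ps S ↔ p ∈ Ps ∧ ∃ v, v ∈ Vp n p ∧ v ∈ S := by
  simp [propsOf, Set.Nonempty, Set.mem_inter_iff]

lemma propsOf_subset (S : Set (Fin n)) : propsOf n Ps S ⊆ Ps := fun _ h => h.1

lemma propsOf_union (S T : Set (Fin n)) :
    propsOf n Ps (S ∪ T) = propsOf n Ps S ∪ propsOf n Ps T := by
  ext p
  simp only [mem_propsOf, Set.mem_union]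
  constructor
  · rintro ⟨h1, v, hv1, (h | h)⟩
    · exact Or.inl ⟨h1, v, hv1, h⟩
    · exact Or.inr ⟨h1, v, hv1, h⟩
  · rintro (⟨h1, v, hv1, h⟩ | ⟨h1, v, hv1, h⟩)
    · exact ⟨h1, v, hv1, Or.inl h⟩
    · exact ⟨h1, v, hv1, Or.inr h⟩

variable {M : Matroid (Fin n)}

lemma dep_iff_exists (hME : M.E = Set.univ)
    (hMI : ∀ S : Set (Fin n), M.Indep S ↔ ∀ U ⊆ S, U.ncard ≤ (propsOf n Ps U).ncard)
    (S : Set (Fin n)) :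
    M.Dep S ↔ ∃ U ⊆ S, (propsOf n Ps U).ncard < U.ncard := by
  rw [Matroid.dep_iff, hMI]
  simp only [hME, Set.subset_univ, and_true]
  push_neg
  rfl

lemma indep_of_inj
    (hMI : ∀ S : Set (Fin n), M.Indep S ↔ ∀ U ⊆ S, U.ncard ≤ (propsOf n Ps U).ncard)
    (S : Set (Fin n)) (f : Fin n → Fin n × Fin n)
    (h1 : ∀ v ∈ S, f v ∈ Ps) (h2 : ∀ v ∈ S, v ∈ Vp n (f v)) (hinj : Set.InjOn f S) :
    M.Indep S := by
  rw [hMI]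
  intro U hU
  exact Set.ncard_le_ncard_of_injOn f
    (fun v hv => mem_propsOf.mpr ⟨h1 v (hU hv), v, h2 v (hU hv), hv⟩)
    (hinj.mono hU) (Set.toFinite _)

end WLDBasic

section Crossing

open Function

variable {n : ℕ} [NeZero n] {Ps : Set (Fin n × Fin n)} {M : Matroid (Fin n)}

lemma exists_crossing_circuit (hW : WellDefinedWLD n Ps)
    (hME : M.E = Set.univ)
    (hMI : ∀ S : Set (Fin n), M.Indep S ↔ ∀ U ⊆ S, U.ncard ≤ (propsOf n Ps U).ncard)
    (X : Set (Fin n)) {pstar : Fin n × Fin n}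
    (hp1 : pstar ∈ propsOf n Ps X) (hp2 : pstar ∈ propsOf n Ps Xᶜ) :
    ∃ C v w, M.IsCircuitOf C ∧ v ∈ C ∧ v ∈ X ∧ w ∈ C ∧ w ∈ Xᶜ := by
  classical
  obtain ⟨hpPs, a, haV, haX⟩ := mem_propsOf.mp hp1
  obtain ⟨-, b, hbV, hbX⟩ := mem_propsOf.mp hp2
  set star : ↥Ps := ⟨pstar, hpPs⟩ with hstar
  set finY : Finset (Fin n) := (Set.toFinite (Vp n pstar ∩ Xᶜ)).toFinset with hfinY
  set finX : Finset (Fin n) := (Set.toFinite (Vp n pstar ∩ X)).toFinset with hfinX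
  set t : ↥Ps ⊕ Unit → Finset (Fin n) :=
    Sum.elim
      (fun q => if (q : Fin n × Fin n) = pstar
        then finY else (Set.toFinite (Vp n (q : Fin n × Fin n))).toFinset)
      (fun _ => finX) with ht
  have tdefstar : t (Sum.inl star) = finY := by
    rw [ht, Sum.elim_inl, if_pos rfl]
  have tdef1 : ∀ q : ↥Ps, (q : Fin n × Fin n) ≠ pstar →
      t (Sum.inl q) = (Set.toFinite (Vp n (q : Fin n × Fin n))).toFinset := by
    intro q hq; rw [ht, Sum.elim_inl, if_neg hq]
  have tdef2 : ∀ u : Unit, t (Sum.inr u) = finX := fun u => by rw [ht, Sum.elim_inr]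
  -- Hall's condition
  have hall : ∀ s : Finset (↥Ps ⊕ Unit), s.card ≤ (s.biUnion t).card := by
    intro s
    set sl := s.toLeft with hsl
    set sr := s.toRight with hsr
    have hcards : s.card = sl.card + sr.card := (Finset.card_toLeft_add_card_toRight).symm
    have hsr1 : sr.card ≤ 1 := Finset.card_le_one.mpr (fun a _ b _ => Subsingleton.elim a b)
    set P₀ : Set (Fin n × Fin n) := Subtype.val '' (↑(sl.erase star) : Set ↥Ps) with hP₀
    have hP₀Ps : P₀ ⊆ Ps := by rintro _ ⟨q, _, rfl⟩; exact q.2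
    have hkcard : P₀.ncard = (sl.erase star).card := by
      rw [hP₀, Set.ncard_image_of_injective _ Subtype.val_injective, Set.ncard_coe_finset]
    have hVPsub : VP n P₀ ⊆ ↑(s.biUnion t) := by
      intro v hv
      obtain ⟨p, ⟨q, hq, rfl⟩, hvV⟩ := mem_VP.mp hv
      have hqsl : q ∈ sl := Finset.mem_of_mem_erase hq
      have hqne : (q : Fin n × Fin n) ≠ pstar :=
        fun h => Finset.ne_of_mem_erase hq (Subtype.ext h)
      simp only [Finset.coe_biUnion, Set.mem_iUnion]
      refine ⟨Sum.inl q, by simpa [hsl] using hqsl, ?_⟩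
      rw [tdef1 q hqne]
      simp only [Finset.mem_coe, Set.Finite.mem_toFinset]
      exact hvV
    by_cases hk0 : (sl.erase star).Nonempty
    · -- main case: apply well-definedness
      have hP₀ne : P₀.Nonempty := by
        obtain ⟨q, hq⟩ := hk0; exact ⟨q, q, hq, rfl⟩
      have h3 : P₀.ncard + 3 ≤ (VP n P₀).ncard := hW P₀ hP₀Ps hP₀ne
      have hsl' : sl.card ≤ (sl.erase star).card + 1 := by
        have : sl ⊆ insert star (sl.erase star) := by
          intro q hq
          by_cases hqs : q = star
          · exact hqs ▸ Finset.mem_insert_self _ _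
          · exact Finset.mem_insert_of_mem (Finset.mem_erase.mpr ⟨hqs, hq⟩)
        calc sl.card ≤ (insert star (sl.erase star)).card := Finset.card_le_card this
          _ ≤ (sl.erase star).card + 1 := Finset.card_insert_le _ _
      have hub : (VP n P₀).ncard ≤ (s.biUnion t).card := by
        rw [← Set.ncard_coe_finset]
        exact Set.ncard_le_ncard hVPsub (Set.toFinite _)
      omega
    · -- degenerate case
      rw [Finset.not_nonempty_iff_eq_empty] at hk0
      have hslsub : sl ⊆ {star} := by
        intro q hq
        by_contra hqs
        have : q ∈ sl.erase star := Finset.mem_erase.mpr ⟨by simpa using hqs, hq⟩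
        simp [hk0] at this
      have hsl1 : sl.card ≤ 1 := le_trans (Finset.card_le_card hslsub) (by simp)
      have hbmem : Sum.inl star ∈ s → b ∈ s.biUnion t := by
        intro h1
        refine Finset.mem_biUnion.mpr ⟨Sum.inl star, h1, ?_⟩
        rw [tdefstar, hfinY, Set.Finite.mem_toFinset]
        exact ⟨hbV, hbX⟩
      have hamem : Sum.inr () ∈ s → a ∈ s.biUnion t := by
        intro h2
        refine Finset.mem_biUnion.mpr ⟨Sum.inr (), h2, ?_⟩
        rw [tdef2, hfinX, Set.Finite.mem_toFinset]
        exact ⟨haV, haX⟩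
      have hsl0 : Sum.inl star ∉ s → sl.card = 0 := by
        intro h1
        rw [Finset.card_eq_zero, Finset.eq_empty_iff_forall_notMem]
        intro q hq
        have := hslsub hq
        simp only [Finset.mem_singleton] at this
        exact h1 (by simpa [hsl, Finset.mem_toLeft, this] using hq)
      have hsr0 : Sum.inr () ∉ s → sr.card = 0 := by
        intro h2
        rw [Finset.card_eq_zero, Finset.eq_empty_iff_forall_notMem]
        intro u hu
        exact h2 (by simpa [hsr, Finset.mem_toRight] using hu)
      by_cases h1 : Sum.inl star ∈ s
      · by_cases h2 : Sum.inr () ∈ s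
        · have hab : a ≠ b := fun h => hbX (h ▸ haX)
          have hpair : ({a, b} : Finset (Fin n)) ⊆ s.biUnion t := by
            intro z hz
            rcases Finset.mem_insert.mp hz with rfl | hz
            · exact hamem h2
            · exact (Finset.mem_singleton.mp hz) ▸ hbmem h1
          have h2' : 2 ≤ (s.biUnion t).card := by
            have := Finset.card_le_card hpair
            rwa [Finset.card_pair hab] at this
          omega
        · have h1' : 1 ≤ (s.biUnion t).card := Finset.card_pos.mpr ⟨b, hbmem h1⟩
          have := hsr0 h2
          omega
      · by_cases h2 : Sum.inr () ∈ s
        · have h1' : 1 ≤ (s.biUnion t).card := Finset.card_pos.mpr ⟨a, hamem h2⟩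
          have := hsl0 h1
          omega
        · have := hsl0 h1
          have := hsr0 h2
          omega
  -- apply Hall's theorem
  obtain ⟨Φ, hΦinj, hΦmem⟩ := (Finset.all_card_le_biUnion_card_iff_exists_injective t).mp hall
  set B : Set (Fin n) := Set.range Φ with hB
  haveI : Nonempty (↥Ps ⊕ Unit) := ⟨Sum.inr ()⟩
  -- cardinality of B
  have hBcard : B.ncard = Ps.ncard + 1 := by
    rw [hB, ← Nat.card_coe_set_eq, Nat.card_range_of_injective hΦinj, Nat.card_sum,
      Nat.card_coe_set_eq]
    simp
  -- B is dependent
  have hBdep : M.Dep B := by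
    rw [dep_iff_exists hME hMI]
    refine ⟨B, subset_rfl, ?_⟩
    have : (propsOf n Ps B).ncard ≤ Ps.ncard :=
      Set.ncard_le_ncard (propsOf_subset _) (Set.toFinite _)
    omega
  -- the inverse map
  set π : ↥Ps ⊕ Unit → Fin n × Fin n :=
    Sum.elim (fun q => (q : Fin n × Fin n)) (fun _ => pstar) with hπ
  set f : Fin n → Fin n × Fin n := fun v => π (Function.invFun Φ v) with hf
  have hfv : ∀ v ∈ B, Φ (Function.invFun Φ v) = v := fun v hv => Function.invFun_eq hv
  have hfPs : ∀ v ∈ B, f v ∈ Ps := by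
    intro v hv
    rcases hi : Function.invFun Φ v with q | u
    · simp only [hf, hi, hπ, Sum.elim_inl]; exact q.2
    · simp only [hf, hi, hπ, Sum.elim_inr]; exact hpPs
  have hfVp : ∀ v ∈ B, v ∈ Vp n (f v) := by
    intro v hv
    have hveq := hfv v hv
    have hmem := hΦmem (Function.invFun Φ v)
    rw [hveq] at hmem
    rcases hi : Function.invFun Φ v with q | u <;> rw [hi] at hmem
    · simp only [hf, hi, hπ, Sum.elim_inl]
      by_cases hq : (q : Fin n × Fin n) = pstar
      · have : q = star := Subtype.ext hq
        rw [this, tdefstar, hfinY, Set.Finite.mem_toFinset] at hmem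
        rw [hq]; exact hmem.1
      · rw [tdef1 q hq, Set.Finite.mem_toFinset] at hmem
        exact hmem
    · simp only [hf, hi, hπ, Sum.elim_inr]
      rw [tdef2, hfinX, Set.Finite.mem_toFinset] at hmem
      exact hmem.1
  -- location of the two special images
  have hstarY : Φ (Sum.inl star) ∈ Xᶜ := by
    have h := hΦmem (Sum.inl star)
    rw [tdefstar, hfinY, Set.Finite.mem_toFinset] at h
    exact h.2
  have hinrX : Φ (Sum.inr ()) ∈ X := by
    have h := hΦmem (Sum.inr ())
    rw [tdef2, hfinX, Set.Finite.mem_toFinset] at h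
    exact h.2
  -- injectivity of f on B ∩ X and on B ∩ Xᶜ
  have hinjXkey : ∀ (S : Set (Fin n)), (Φ (Sum.inl star) ∉ S ∨ Φ (Sum.inr ()) ∉ S) →
      Set.InjOn f (B ∩ S) := by
    intro S hS v hv w hw hvw
    have hiv := hfv v hv.1
    have hiw := hfv w hw.1
    rcases hjv : Function.invFun Φ v with q | u <;> rcases hjw : Function.invFun Φ w with r | u'
    · rw [hf] at hvw
      simp only [hjv, hjw, hπ, Sum.elim_inl] at hvw
      have : q = r := Subtype.ext hvw
      rw [← hiv, ← hiw, hjv, hjw, this]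
    · rw [hf] at hvw
      simp only [hjv, hjw, hπ, Sum.elim_inl, Sum.elim_inr] at hvw
      have hq : q = star := Subtype.ext hvw
      have hvs : v = Φ (Sum.inl star) := by rw [← hiv, hjv, hq]
      have hws : w = Φ (Sum.inr u') := by rw [← hiw, hjw]
      rcases hS with hS | hS
      · exact absurd (hvs ▸ hv.2) hS
      · exact absurd ((by rw [hws] at hw; exact hw.2 : Φ (Sum.inr u') ∈ S)) (by
          cases u'; exact hS)
    · rw [hf] at hvw
      simp only [hjv, hjw, hπ, Sum.elim_inl, Sum.elim_inr] at hvw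
      have hr : r = star := Subtype.ext hvw.symm
      have hws : w = Φ (Sum.inl star) := by rw [← hiw, hjw, hr]
      have hvs : v = Φ (Sum.inr u) := by rw [← hiv, hjv]
      rcases hS with hS | hS
      · exact absurd (hws ▸ hw.2) hS
      · exact absurd ((by rw [hvs] at hv; exact hv.2 : Φ (Sum.inr u) ∈ S)) (by
          cases u; exact hS)
    · rw [← hiv, ← hiw, hjv, hjw]
  have hBXindep : M.Indep (B ∩ X) :=
    indep_of_inj hMI _ f (fun v hv => hfPs v hv.1) (fun v hv => hfVp v hv.1)
      (hinjXkey X (Or.inl (fun h => hstarY h)))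
  have hBYindep : M.Indep (B ∩ Xᶜ) :=
    indep_of_inj hMI _ f (fun v hv => hfPs v hv.1) (fun v hv => hfVp v hv.1)
      (hinjXkey Xᶜ (Or.inr (fun h => h hinrX)))
  -- extract the circuit
  obtain ⟨C, hCB, hC⟩ := exists_circuitOf_subset hBdep
  have hCX : (C ∩ X).Nonempty := by
    rw [Set.nonempty_iff_ne_empty]
    intro hemp
    have : C ⊆ B ∩ Xᶜ := fun z hz => ⟨hCB hz,
      fun hzX => (Set.eq_empty_iff_forall_notMem.mp hemp z) ⟨hz, hzX⟩⟩
    exact hC.not_indep (hBYindep.subset this)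
  have hCY : (C ∩ Xᶜ).Nonempty := by
    rw [Set.nonempty_iff_ne_empty]
    intro hemp
    have : C ⊆ B ∩ X := fun z hz => ⟨hCB hz, by
      by_contra hzX
      exact (Set.eq_empty_iff_forall_notMem.mp hemp z) ⟨hz, hzX⟩⟩
    exact hC.not_indep (hBXindep.subset this)
  obtain ⟨v, hvC, hvX⟩ := hCX
  obtain ⟨w, hwC, hwX⟩ := hCY
  exact ⟨C, v, w, hC, hvC, hvX, hwC, hwX⟩

end Crossing

/-- For a well-defined Wilson loop diagram with `Ps` nonempty and
`V_Ps = Fin n`, the matroid `M(W)` is disconnected iff the propagators can be partitioned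
into two nonempty sets with disjoint supports (equivalently, whose propagator flats
partition `Fin n`). -/
theorem disconnected_iff_propagator_partition (n : ℕ) [NeZero n]
    (Ps : Set (Fin n × Fin n)) (hW : WellDefinedWLD n Ps) (hPs : Ps.Nonempty)
    (hcover : VP n Ps = Set.univ)
    (M : Matroid (Fin n)) (hME : M.E = Set.univ)
    (hMI : ∀ S : Set (Fin n), M.Indep S ↔ ∀ U ⊆ S, U.ncard ≤ (propsOf n Ps U).ncard) :
    ¬ M.Conn ↔ ∃ P₁ P₂ : Set (Fin n × Fin n), P₁.Nonempty ∧ P₂.Nonempty ∧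
      Disjoint P₁ P₂ ∧ P₁ ∪ P₂ = Ps ∧ VP n P₁ ∩ VP n P₂ = ∅ := by
  classical
  constructor
  · -- forward direction
    intro hnc
    have hEne : M.E.Nonempty := by
      rw [hME]; exact ⟨⟨0, Nat.pos_of_ne_zero (NeZero.ne n)⟩, trivial⟩
    rw [Matroid.Conn] at hnc
    push_neg at hnc
    obtain ⟨x, hxE, y, hyE, hxy, hno⟩ := hnc hEne
    set X : Set (Fin n) := {v | v = x ∨ ∃ C, M.IsCircuitOf C ∧ x ∈ C ∧ v ∈ C} with hXdef
    have hxX : x ∈ X := Or.inl rfl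
    have hyX : y ∈ Xᶜ := by
      intro h
      rcases h with h | ⟨C, hC, h1, h2⟩
      · exact hxy h.symm
      · exact hno C hC h1 h2
    -- the two propagator sets do not interact
    have hdisj : propsOf n Ps X ∩ propsOf n Ps Xᶜ = ∅ := by
      rw [Set.eq_empty_iff_forall_notMem]
      rintro p ⟨hp1, hp2⟩
      obtain ⟨C, v, w, hC, hvC, hvX, hwC, hwX⟩ :=
        exists_crossing_circuit hW hME hMI X hp1 hp2
      apply hwX
      rcases hvX with rfl | ⟨D, hD, hxD, hvD⟩
      · exact Or.inr ⟨C, hC, hvC, hwC⟩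
      · obtain ⟨C', hC', hxC', hwC'⟩ := circuit_trans hD hC hxD hwC ⟨v, hvD, hvC⟩
        exact Or.inr ⟨C', hC', hxC', hwC'⟩
    refine ⟨propsOf n Ps X, propsOf n Ps Xᶜ, ?_, ?_, ?_, ?_, ?_⟩
    · -- nonempty 1
      have hx : x ∈ VP n Ps := by rw [hcover]; trivial
      obtain ⟨p, hpPs, hpx⟩ := mem_VP.mp hx
      exact ⟨p, mem_propsOf.mpr ⟨hpPs, x, hpx, hxX⟩⟩
    · -- nonempty 2
      have hy : y ∈ VP n Ps := by rw [hcover]; trivial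
      obtain ⟨p, hpPs, hpy⟩ := mem_VP.mp hy
      exact ⟨p, mem_propsOf.mpr ⟨hpPs, y, hpy, hyX⟩⟩
    · exact Set.disjoint_iff_inter_eq_empty.mpr hdisj
    · -- union is Ps
      apply Set.Subset.antisymm
      · exact Set.union_subset (propsOf_subset _) (propsOf_subset _)
      · intro p hp
        by_cases h : p.1 ∈ X
        · exact Or.inl (mem_propsOf.mpr ⟨hp, p.1, fst_mem_Vp p, h⟩)
        · exact Or.inr (mem_propsOf.mpr ⟨hp, p.1, fst_mem_Vp p, h⟩)
    · -- disjoint supports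
      rw [Set.eq_empty_iff_forall_notMem]
      rintro v ⟨hv1, hv2⟩
      obtain ⟨p, hpP, hvp⟩ := mem_VP.mp hv1
      obtain ⟨q, hqP, hvq⟩ := mem_VP.mp hv2
      by_cases h : v ∈ X
      · have : q ∈ propsOf n Ps X ∩ propsOf n Ps Xᶜ :=
          ⟨mem_propsOf.mpr ⟨(propsOf_subset _) hqP, v, hvq, h⟩, hqP⟩
        rw [hdisj] at this
        exact this
      · have : p ∈ propsOf n Ps X ∩ propsOf n Ps Xᶜ :=
          ⟨hpP, mem_propsOf.mpr ⟨(propsOf_subset _) hpP, v, hvp, h⟩⟩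
        rw [hdisj] at this
        exact this
  · -- backward direction
    rintro ⟨P₁, P₂, hP₁, hP₂, hdisj, huni, hVdisj⟩
    rintro ⟨hEne, hcon⟩
    obtain ⟨p, hpP₁⟩ := hP₁
    obtain ⟨q, hqP₂⟩ := hP₂
    have hxV : p.1 ∈ VP n P₁ := mem_VP.mpr ⟨p, hpP₁, fst_mem_Vp p⟩
    have hyV : q.1 ∈ VP n P₂ := mem_VP.mpr ⟨q, hqP₂, fst_mem_Vp q⟩
    have hxy : p.1 ≠ q.1 := by
      intro h
      have : p.1 ∈ VP n P₁ ∩ VP n P₂ := ⟨hxV, h ▸ hyV⟩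
      rw [hVdisj] at this
      exact this
    have hcover2 : VP n P₁ ∪ VP n P₂ = Set.univ := by
      rw [← VP_union, huni, hcover]
    rcases hcon p.1 (by rw [hME]; trivial) q.1 (by rw [hME]; trivial) with heq |
      ⟨C, hC, hxC, hyC⟩
    · exact hxy heq
    · -- split the circuit, contradiction
      have hyP₁ : q.1 ∉ VP n P₁ := by
        intro h
        have : q.1 ∈ VP n P₁ ∩ VP n P₂ := ⟨h, hyV⟩
        rw [hVdisj] at this
        exact this
      have hxP₂ : p.1 ∉ VP n P₂ := by
        intro h
        have : p.1 ∈ VP n P₁ ∩ VP n P₂ := ⟨hxV, h⟩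
        rw [hVdisj] at this
        exact this
      have hC₁ : M.Indep (C ∩ VP n P₁) := by
        refine hC.ssubset_indep (Set.inter_subset_left.ssubset_of_ne ?_)
        intro h
        have : q.1 ∈ C ∩ VP n P₁ := by rw [h]; exact hyC
        exact hyP₁ this.2
      have hC₂ : M.Indep (C ∩ VP n P₂) := by
        refine hC.ssubset_indep (Set.inter_subset_left.ssubset_of_ne ?_)
        intro h
        have : p.1 ∈ C ∩ VP n P₂ := by rw [h]; exact hxC
        exact hxP₂ this.2
      obtain ⟨U, hUC, hUlt⟩ := (dep_iff_exists hME hMI C).mp hC.dep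
      set U₁ := U ∩ VP n P₁ with hU₁
      set U₂ := U ∩ VP n P₂ with hU₂
      have hU12 : U = U₁ ∪ U₂ := by
        rw [hU₁, hU₂, ← Set.inter_union_distrib_left, hcover2, Set.inter_univ]
      have hU12disj : Disjoint U₁ U₂ := by
        rw [Set.disjoint_iff_inter_eq_empty, Set.eq_empty_iff_forall_notMem]
        rintro v ⟨h1, h2⟩
        have : v ∈ VP n P₁ ∩ VP n P₂ := ⟨h1.2, h2.2⟩
        rw [hVdisj] at this
        exact this
      have hpdisj : Disjoint (propsOf n Ps U₁) (propsOf n Ps U₂) := by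
        rw [Set.disjoint_left]
        intro r hr1 hr2
        obtain ⟨hrPs, v, hvV, hvU₁⟩ := mem_propsOf.mp hr1
        obtain ⟨-, w, hwV, hwU₂⟩ := mem_propsOf.mp hr2
        have hr12 : r ∈ P₁ ∪ P₂ := huni ▸ hrPs
        rcases hr12 with hr | hr
        · have : w ∈ VP n P₁ ∩ VP n P₂ := ⟨mem_VP.mpr ⟨r, hr, hwV⟩, hwU₂.2⟩
          rw [hVdisj] at this
          exact this
        · have : v ∈ VP n P₁ ∩ VP n P₂ := ⟨hvU₁.2, mem_VP.mpr ⟨r, hr, hvV⟩⟩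
          rw [hVdisj] at this
          exact this
      have hcardU : U.ncard = U₁.ncard + U₂.ncard := by
        rw [hU12]
        exact Set.ncard_union_eq hU12disj (Set.toFinite _) (Set.toFinite _)
      have hcardP : (propsOf n Ps U).ncard =
          (propsOf n Ps U₁).ncard + (propsOf n Ps U₂).ncard := by
        conv_lhs => rw [hU12, propsOf_union]
        exact Set.ncard_union_eq hpdisj (Set.toFinite _) (Set.toFinite _)
      have h1 : U₁.ncard ≤ (propsOf n Ps U₁).ncard :=
        (hMI _).mp hC₁ U₁ (Set.inter_subset_inter_left _ hUC)
      have h2 : U₂.ncard ≤ (propsOf n Ps U₂).ncard :=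
        (hMI _).mp hC₂ U₂ (Set.inter_subset_inter_left _ hUC)
      omega
end

section
/- Let W = (𝒫, n) be a well-defined Wilson loop diagram with V_𝒫 = Fin n whose matroid M = M(W) is connected. Let P ⊆ 𝒫 be nonempty and proper such that F(P) is a union of circuits of M, the restriction M|F(P) is connected, and the contraction M/F(P) is connected (i.e., F(P) is a flacet of M). If F(P) is not a cyclic interval of Fin n, then W has two crossing propagators: there exist p, q ∈ 𝒫 whose endpoints interleave, i.e. exactly one of i_q, j_q lies in the open cyclic interval from i_p to j_p and the other lies in the open cyclic interval from j_p to i_p. -/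
open Matroid Set

open Fin.NatCast in
/-- A cyclic interval of `Fin n`: a set of the form `{a, a+1, …, a+(m-1)}`,
with addition mod `n`. -/
def CyclicInterval (n : ℕ) [NeZero n] (S : Set (Fin n)) : Prop :=
  ∃ (a : Fin n) (m : ℕ), S = {x : Fin n | ∃ i < m, x = a + (i : Fin n)}

open Fin.NatCast in
/-- The open cyclic interval from `a` to `b`: the vertices strictly between `a` and `b`
in the counterclockwise cyclic order, excluding `a` and `b`. -/
def openCyclicInterval (n : ℕ) [NeZero n] (a b : Fin n) : Set (Fin n) :=
  {x : Fin n | ∃ i : ℕ, 0 < i ∧ i < (b - a).val ∧ x = a + (i : Fin n)}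

/-- Two propagators cross when their endpoints interleave: exactly one endpoint of `q`
lies strictly between the endpoints of `p` on each of the two arcs they determine. -/
def CrossingProps (n : ℕ) [NeZero n] (p q : Fin n × Fin n) : Prop :=
  (q.1 ∈ openCyclicInterval n p.1 p.2 ∧ q.2 ∈ openCyclicInterval n p.2 p.1) ∨
  (q.2 ∈ openCyclicInterval n p.1 p.2 ∧ q.1 ∈ openCyclicInterval n p.2 p.1)


open Fin.NatCast

section AuxW
set_option linter.unusedSectionVars false
variable {n : ℕ} [NeZero n]
set_option linter.unusedSectionVars false

lemma npos : 0 < n := Nat.pos_of_ne_zero (NeZero.ne n)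

lemma val_sub (u v : Fin n) :
    (u - v).val = if v.val ≤ u.val then u.val - v.val else u.val + n - v.val := by
  rw [Fin.sub_def]
  simp only
  have hu := u.isLt; have hv := v.isLt
  rcases le_or_gt v.val u.val with h | h
  · rw [if_pos h]
    have h2 : n - v.val + u.val = (u.val - v.val) + n := by omega
    rw [h2, Nat.add_mod_right]
    exact Nat.mod_eq_of_lt (by omega)
  · rw [if_neg (by omega)]
    have h2 : n - v.val + u.val = u.val + n - v.val := by omega
    rw [h2]
    exact Nat.mod_eq_of_lt (by omega)

lemma val_add_one (x : Fin n) :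
    (x + 1).val = if x.val + 1 = n then 0 else x.val + 1 := by
  have hx := x.isLt
  rw [Fin.add_def]
  show (x.val + (1 : Fin n).val) % n = _
  rw [Fin.val_one']
  rcases Nat.lt_or_ge 1 n with h | h
  · rw [Nat.mod_eq_of_lt h]
    rcases eq_or_ne (x.val + 1) n with h2 | h2
    · rw [if_pos h2, h2, Nat.mod_self]
    · rw [if_neg h2, Nat.mod_eq_of_lt (by omega)]
  · have hn1 : n = 1 := by omega
    subst hn1
    simp

/-- membership in the open cyclic interval, in coordinates -/
lemma mem_open_iff {a b x : Fin n} :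
    x ∈ openCyclicInterval n a b ↔ 0 < (x - a).val ∧ (x - a).val < (b - a).val := by
  constructor
  · rintro ⟨i, hi0, hib, rfl⟩
    have hin : i < n := lt_trans hib (b - a).isLt
    have : (a + (i : Fin n)) - a = (i : Fin n) := by abel
    rw [this, Fin.val_cast_of_lt hin]
    exact ⟨hi0, hib⟩
  · rintro ⟨h0, h1⟩
    refine ⟨(x - a).val, h0, h1, ?_⟩
    rw [Fin.cast_val_eq_self]
    abel

/-- closed cyclic arc from a to b -/
def inArc (a b x : Fin n) : Prop := (x - a).val ≤ (b - a).val

lemma arc_refl_left (a b : Fin n) : inArc a b a := by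
  simp [inArc]

lemma arc_refl_right (a b : Fin n) : inArc a b b := le_refl _

lemma arc_singleton {c z : Fin n} (h : inArc c c z) : z = c := by
  unfold inArc at h
  simp only [sub_self, Fin.val_zero, Nat.le_zero] at h
  have : z - c = 0 := Fin.ext h
  simpa [sub_eq_zero] using this

end AuxW

section Geo
set_option linter.unusedSectionVars false
variable {n : ℕ} [NeZero n]

lemma open_partition {a b x : Fin n} (hab : a ≠ b) (hxa : x ≠ a) (hxb : x ≠ b) :
    x ∈ openCyclicInterval n a b ∨ x ∈ openCyclicInterval n b a := by
  have ha := a.isLt; have hb := b.isLt; have hx := x.isLt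
  have hab' : a.val ≠ b.val := fun h => hab (Fin.ext h)
  have hxa' : x.val ≠ a.val := fun h => hxa (Fin.ext h)
  have hxb' : x.val ≠ b.val := fun h => hxb (Fin.ext h)
  rw [mem_open_iff, mem_open_iff, val_sub, val_sub, val_sub, val_sub]
  split_ifs <;> omega

lemma open_disjoint {a b x : Fin n} (h1 : x ∈ openCyclicInterval n a b)
    (h2 : x ∈ openCyclicInterval n b a) : False := by
  have ha := a.isLt; have hb := b.isLt; have hx := x.isLt
  rw [mem_open_iff, val_sub, val_sub] at h1 h2
  split_ifs at h1 h2 <;> omega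

lemma open_ne {a b x : Fin n} (h : x ∈ openCyclicInterval n a b) : x ≠ a ∧ x ≠ b := by
  have ha := a.isLt; have hb := b.isLt; have hx := x.isLt
  rw [mem_open_iff, val_sub, val_sub] at h
  constructor <;> intro h' <;> subst h' <;> split_ifs at h <;> omega

lemma noncross_side {q1 q2 p1 p2 : Fin n} (hq : q1 ≠ q2)
    (h : ¬ CrossingProps n (q1, q2) (p1, p2)) :
    (inArc q1 q2 p1 ∧ inArc q1 q2 p2) ∨ (inArc q2 q1 p1 ∧ inArc q2 q1 p2) := by
  unfold CrossingProps at h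
  push_neg at h
  have hq' : q1.val ≠ q2.val := fun h' => hq (Fin.ext h')
  have ha := q1.isLt; have hb := q2.isLt; have hx := p1.isLt; have hy := p2.isLt
  simp only [mem_open_iff] at h
  obtain ⟨h1, h2⟩ := h
  unfold inArc
  rw [val_sub, val_sub, val_sub, val_sub, val_sub, val_sub] at *
  split_ifs at * <;> omega

lemma arc_elem_cases {q1 q2 e : Fin n} (he : inArc q1 q2 e) :
    e ∈ openCyclicInterval n q1 q2 ∨ e = q1 ∨ e = q2 := by
  have ha := q1.isLt; have hb := q2.isLt; have hx := e.isLt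
  simp only [mem_open_iff, ← Fin.val_inj]
  unfold inArc at he
  rw [val_sub, val_sub] at *
  split_ifs at * <;> omega

lemma arc_succ_cases {q1 q2 e : Fin n} (he : inArc q1 q2 e) :
    e + 1 ∈ openCyclicInterval n q1 q2 ∨ e + 1 = q1 ∨ e + 1 = q2 ∨ e + 1 = q2 + 1 := by
  have ha := q1.isLt; have hb := q2.isLt; have hx := e.isLt
  simp only [mem_open_iff, ← Fin.val_inj]
  unfold inArc at he
  simp only [val_sub, val_add_one] at *
  split_ifs at * <;> omega

lemma arcT_mem {q1 q2 : Fin n} (hq : q1 ≠ q2) (h1 : q2 + 1 ≠ q1) :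
    ∀ z ∈ Vp n (q1, q2), inArc q1 (q2 + 1) z := by
  intro z hz
  have ha := q1.isLt; have hb := q2.isLt; have hx := z.isLt
  have hq' : q1.val ≠ q2.val := fun h' => hq (Fin.ext h')
  have h1' : (q2 + 1).val ≠ q1.val := fun h' => h1 (Fin.ext h')
  simp only [Vp, Set.mem_insert_iff, Set.mem_singleton_iff] at hz
  unfold inArc
  rcases hz with rfl | rfl | rfl | rfl <;>
    simp only [val_sub, val_add_one] at * <;> split_ifs at * <;> omega

lemma arcT_cases {q1 q2 z : Fin n} (hq : q1 ≠ q2) (h1 : q2 + 1 ≠ q1)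
    (hz : inArc q1 (q2 + 1) z) (h2 : z ∉ openCyclicInterval n q1 q2) :
    z ∈ Vp n (q1, q2) := by
  have ha := q1.isLt; have hb := q2.isLt; have hx := z.isLt
  have hq' : q1.val ≠ q2.val := fun h' => hq (Fin.ext h')
  have h1' : (q2 + 1).val ≠ q1.val := fun h' => h1 (Fin.ext h')
  simp only [Vp, Set.mem_insert_iff, Set.mem_singleton_iff, ← Fin.val_inj]
  rw [mem_open_iff] at h2
  unfold inArc at hz
  simp only [val_sub, val_add_one] at *
  split_ifs at * <;> omega

lemma subarc {s t u v : Fin n} (hu : inArc s t u) (hv : inArc s t v) :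
    (∀ z, inArc u v z → inArc s t z) ∨ (∀ z, inArc v u z → inArc s t z) := by
  have ha := s.isLt; have hb := t.isLt; have hc := u.isLt; have hd := v.isLt
  rcases le_or_gt (u - s).val (v - s).val with h | h
  · left
    intro z hz
    have hz' := z.isLt
    unfold inArc at *
    rw [val_sub, val_sub] at h
    rw [val_sub, val_sub] at hu hv ⊢
    rw [val_sub, val_sub] at hz
    split_ifs at * <;> omega
  · right
    intro z hz
    have hz' := z.isLt
    unfold inArc at *
    rw [val_sub, val_sub] at h
    rw [val_sub, val_sub] at hu hv ⊢
    rw [val_sub, val_sub] at hz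
    split_ifs at * <;> omega

lemma arc_total (a b c : Fin n) : inArc a b c ∨ inArc a c b := le_total _ _

lemma arc_mono {a b c : Fin n} (h : inArc a b c) : ∀ w, inArc a c w → inArc a b w :=
  fun _ hw => le_trans hw h

lemma arc_trans2 {a b c : Fin n} (h : inArc a c b) :
    ∀ w, inArc b c w → inArc a c w := by
  intro w hw
  have ha := a.isLt; have hb := b.isLt; have hc := c.isLt; have hw' := w.isLt
  unfold inArc at *
  rw [val_sub, val_sub] at h
  rw [val_sub, val_sub] at hw
  rw [val_sub, val_sub]
  split_ifs at * <;> omega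

lemma arc_H1 {x y z w : Fin n} (hw : inArc x z w) :
    inArc x y w ∨ inArc y z w := by
  have ha := x.isLt; have hb := y.isLt; have hc := z.isLt; have hw' := w.isLt
  unfold inArc at *
  rw [val_sub, val_sub] at hw
  rw [val_sub, val_sub, val_sub, val_sub]
  split_ifs at * <;> omega

lemma arc_H2 {x y z w : Fin n} (h : ¬ inArc x y z) (hw : inArc z x w) :
    inArc z y w ∨ inArc x y w := by
  have ha := x.isLt; have hb := y.isLt; have hc := z.isLt; have hw' := w.isLt
  unfold inArc at *
  rw [val_sub, val_sub] at h hw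
  rw [val_sub, val_sub, val_sub, val_sub]
  split_ifs at * <;> omega

/-- being in the same "gap" of the complement of `F` -/
def SG (F : Set (Fin n)) (x y : Fin n) : Prop :=
  x ∉ F ∧ y ∉ F ∧ ((∀ z, inArc x y z → z ∉ F) ∨ (∀ z, inArc y x z → z ∉ F))

lemma SG_refl {F : Set (Fin n)} {x : Fin n} (h : x ∉ F) : SG F x x :=
  ⟨h, h, Or.inl (fun z hz => by rw [arc_singleton hz]; exact h)⟩

lemma SG_symm {F : Set (Fin n)} {x y : Fin n} (h : SG F x y) : SG F y x :=
  ⟨h.2.1, h.1, h.2.2.symm⟩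

lemma SG_trans {F : Set (Fin n)} {x y z : Fin n} (h1 : SG F x y) (h2 : SG F y z) :
    SG F x z := by
  obtain ⟨hx, hy, hor1⟩ := h1
  obtain ⟨-, hz, hor2⟩ := h2
  refine ⟨hx, hz, ?_⟩
  rcases hor1 with hA1 | hB1 <;> rcases hor2 with hA2 | hB2
  · -- [x,y] free, [y,z] free
    left; intro w hw
    rcases arc_H1 (y := y) hw with h | h
    · exact hA1 w h
    · exact hA2 w h
  · -- [x,y] free, [z,y] free
    by_cases hc : inArc x y z
    · left; intro w hw
      exact hA1 w (arc_mono hc w hw)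
    · right; intro w hw
      rcases arc_H2 hc hw with h | h
      · exact hB2 w h
      · exact hA1 w h
  · -- [y,x] free, [y,z] free
    rcases arc_total y z x with hc | hc
    · left; intro w hw
      exact hA2 w (arc_trans2 hc w hw)
    · right; intro w hw
      exact hB1 w (arc_trans2 hc w hw)
  · -- [y,x] free, [z,y] free
    right; intro w hw
    rcases arc_H1 (y := y) hw with h | h
    · exact hB2 w h
    · exact hB1 w h

lemma SG_of_arc {F : Set (Fin n)} {s t : Fin n} (hfree : ∀ z, inArc s t z → z ∉ F)
    {u v : Fin n} (hu : inArc s t u) (hv : inArc s t v) : SG F u v := by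
  refine ⟨hfree u hu, hfree v hv, ?_⟩
  rcases subarc hu hv with h | h
  · exact Or.inl (fun z hz => hfree z (h z hz))
  · exact Or.inr (fun z hz => hfree z (h z hz))

end Geo

section Count
set_option linter.unusedSectionVars false
variable {n : ℕ} [NeZero n] {Ps : Set (Fin n × Fin n)} {M : Matroid (Fin n)}

lemma propsOf_mono {S T : Set (Fin n)} (h : S ⊆ T) : propsOf n Ps S ⊆ propsOf n Ps T := by
  rintro p ⟨hp, z, hz1, hz2⟩
  exact ⟨hp, z, hz1, h hz2⟩

lemma q1_mem_Vp (q : Fin n × Fin n) : q.1 ∈ Vp n q := by simp [Vp]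
lemma q2_mem_Vp (q : Fin n × Fin n) : q.2 ∈ Vp n q := by simp [Vp]

lemma Vp_swap (a b : Fin n) : Vp n (a, b) = Vp n (b, a) := by
  ext z; simp [Vp]; tauto

lemma VP_singleton (q : Fin n × Fin n) : VP n {q} = Vp n q := by
  simp [VP]

lemma support_distinct (hW : WellDefinedWLD n Ps) {q : Fin n × Fin n} (hq : q ∈ Ps) :
    q.1 ≠ q.2 ∧ q.1 + 1 ≠ q.2 ∧ q.2 + 1 ≠ q.1 := by
  have h4 : 4 ≤ (Vp n q).ncard := by
    have := hW {q} (by simpa using hq) ⟨q, rfl⟩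
    simpa [VP_singleton, Set.ncard_singleton] using this
  have hle : ∀ a b c : Fin n, (({a, b, c} : Set (Fin n)).ncard ≤ 3) := by
    intro a b c
    calc ({a, b, c} : Set (Fin n)).ncard ≤ ({b, c} : Set (Fin n)).ncard + 1 :=
      Set.ncard_insert_le _ _
    _ ≤ (({c} : Set (Fin n)).ncard + 1) + 1 := by
        have := Set.ncard_insert_le b ({c} : Set (Fin n)); omega
    _ ≤ 3 := by simp [Set.ncard_singleton]
  refine ⟨?_, ?_, ?_⟩
  · intro h
    have : Vp n q ⊆ {q.1, q.1 + 1, q.2 + 1} := by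
      rw [Vp, ← h]; intro z hz; simp at hz ⊢; tauto
    have := Set.ncard_le_ncard this (Set.toFinite _)
    have := hle q.1 (q.1 + 1) (q.2 + 1); omega
  · intro h
    have : Vp n q ⊆ {q.1, q.2, q.2 + 1} := by
      rw [Vp, h]; intro z hz; simp at hz ⊢; tauto
    have := Set.ncard_le_ncard this (Set.toFinite _)
    have := hle q.1 q.2 (q.2 + 1); omega
  · intro h
    have : Vp n q ⊆ {q.1, q.1 + 1, q.2} := by
      rw [Vp, h]; intro z hz; simp at hz ⊢; tauto
    have := Set.ncard_le_ncard this (Set.toFinite _)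
    have := hle q.1 (q.1 + 1) q.2; omega

variable (hME : M.E = Set.univ)
  (hMI : ∀ S : Set (Fin n), M.Indep S ↔ ∀ U ⊆ S, U.ncard ≤ (propsOf n Ps U).ncard)

include hME hMI

lemma circuit_ssubset_indep {C S : Set (Fin n)} (hC : M.IsCircuitOf C) (hS : S ⊂ C) :
    M.Indep S := by
  by_contra h
  exact hC.2 S hS (dep_iff.2 ⟨h, by rw [hME]; exact Set.subset_univ _⟩)

lemma circuit_ssubset_card {C S : Set (Fin n)} (hC : M.IsCircuitOf C) (hS : S ⊂ C) :
    S.ncard ≤ (propsOf n Ps S).ncard :=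
  (hMI S).1 (circuit_ssubset_indep hME hMI hC hS) S (le_refl _)

lemma circuit_card {C : Set (Fin n)} (hC : M.IsCircuitOf C) :
    C.ncard = (propsOf n Ps C).ncard + 1 := by
  have hdep : ¬ M.Indep C := (dep_iff.1 hC.1).1
  rw [hMI] at hdep
  push_neg at hdep
  obtain ⟨U, hUC, hU⟩ := hdep
  have hUeq : U = C := by
    by_contra hne
    have := circuit_ssubset_card hME hMI hC (ssubset_of_subset_of_ne hUC hne)
    omega
  rw [hUeq] at hU
  have hCne : C.Nonempty := by
    rw [Set.nonempty_iff_ne_empty]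
    rintro rfl
    simp at hU
  obtain ⟨e, he⟩ := hCne
  have hsub : C \ {e} ⊂ C := Set.sdiff_singleton_ssubset.2 he
  have h1 := circuit_ssubset_card hME hMI hC hsub
  have h2 : (propsOf n Ps (C \ {e})).ncard ≤ (propsOf n Ps C).ncard :=
    Set.ncard_le_ncard (propsOf_mono Set.diff_subset) (Set.toFinite _)
  have h3 : (C \ {e}).ncard = C.ncard - 1 := by
    rw [Set.ncard_diff_singleton_of_mem he]
  have hCpos : 1 ≤ C.ncard := (Set.ncard_pos (Set.toFinite _)).2 ⟨e, he⟩
  omega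

lemma dep_contains_circuit {D : Set (Fin n)} (hD : ¬ M.Indep D) :
    ∃ C, C ⊆ D ∧ M.IsCircuitOf C := by
  suffices H : ∀ m (D : Set (Fin n)), D.ncard = m → ¬ M.Indep D → ∃ C, C ⊆ D ∧ M.IsCircuitOf C by
    exact H D.ncard D rfl hD
  intro m
  induction m using Nat.strong_induction_on with
  | _ m ih =>
    intro D hm hD
    by_cases hmin : ∃ S, S ⊂ D ∧ ¬ M.Indep S
    · obtain ⟨S, hS1, hS2⟩ := hmin
      obtain ⟨C, hC1, hC2⟩ := ih S.ncard (by
        rw [← hm]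
        exact Set.ncard_lt_ncard hS1 (Set.toFinite _)) S rfl hS2
      exact ⟨C, hC1.trans hS1.subset, hC2⟩
    · push_neg at hmin
      refine ⟨D, le_refl _, ⟨dep_iff.2 ⟨hD, by rw [hME]; exact Set.subset_univ _⟩, ?_⟩⟩
      intro S hS hdep
      exact (dep_iff.1 hdep).1 (hmin S hS)

end Count

section Sep
set_option linter.unusedSectionVars false
variable {n : ℕ} [NeZero n] {Ps : Set (Fin n × Fin n)} {M : Matroid (Fin n)}
variable (hME : M.E = Set.univ)
  (hMI : ∀ S : Set (Fin n), M.Indep S ↔ ∀ U ⊆ S, U.ncard ≤ (propsOf n Ps U).ncard)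

include hME hMI

lemma local_prop_arc (hW : WellDefinedWLD n Ps)
    (hcr : ∀ p ∈ Ps, ∀ q ∈ Ps, ¬ CrossingProps n p q)
    {F : Set (Fin n)}
    (hresF : ∀ x ∈ F, ∀ y ∈ F, x = y ∨ ∃ C, M.IsCircuitOf C ∧ C ⊆ F ∧ x ∈ C ∧ y ∈ C)
    {q : Fin n × Fin n} (hqPs : q ∈ Ps) (hqF : Vp n q ∩ F = ∅) :
    ∃ s t : Fin n, (∀ z ∈ Vp n q, inArc s t z) ∧ (∀ z, inArc s t z → z ∉ F) := by
  obtain ⟨q1, q2⟩ := q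
  obtain ⟨hq12, hq1p, hq2p⟩ := support_distinct hW hqPs
  simp only at hq12 hq1p hq2p
  by_cases hA : ∃ x ∈ F, x ∈ openCyclicInterval n q1 q2
  case neg =>
    refine ⟨q1, q2 + 1, arcT_mem hq12 hq2p, fun z hz hzF => ?_⟩
    by_cases h : z ∈ openCyclicInterval n q1 q2
    · exact hA ⟨z, hzF, h⟩
    · exact Set.eq_empty_iff_forall_notMem.1 hqF z ⟨arcT_cases hq12 hq2p hz h, hzF⟩
  by_cases hB : ∃ y ∈ F, y ∈ openCyclicInterval n q2 q1
  case neg =>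
    refine ⟨q2, q1 + 1, fun z hz => arcT_mem hq12.symm hq1p z (by rwa [Vp_swap]), fun z hz hzF => ?_⟩
    by_cases h : z ∈ openCyclicInterval n q2 q1
    · exact hB ⟨z, hzF, h⟩
    · refine Set.eq_empty_iff_forall_notMem.1 hqF z ⟨?_, hzF⟩
      rw [← Vp_swap q2 q1]
      exact arcT_cases hq12.symm hq1p hz h
  exfalso
  obtain ⟨x, hxF, hxO⟩ := hA
  obtain ⟨y, hyF, hyO⟩ := hB
  have hxy : x ≠ y := fun h => open_disjoint (h ▸ hxO) hyO
  rcases hresF x hxF y hyF with h | ⟨C, hC, hCF, hxC, hyC⟩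
  · exact hxy h
  have hCV : ∀ z ∈ C, z ∉ Vp n (q1, q2) := fun z hz hzV =>
    Set.eq_empty_iff_forall_notMem.1 hqF z ⟨hzV, hCF hz⟩
  set CA := C ∩ openCyclicInterval n q1 q2 with hCAdef
  set CB := C ∩ openCyclicInterval n q2 q1 with hCBdef
  have hq1V : q1 ∈ Vp n (q1, q2) := by simp [Vp]
  have hq2V : q2 ∈ Vp n (q1, q2) := by simp [Vp]
  have hCsplit : C = CA ∪ CB := by
    ext z
    constructor
    · intro hz
      have hz1 : z ≠ q1 := fun h => hCV z hz (h ▸ hq1V)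
      have hz2 : z ≠ q2 := fun h => hCV z hz (h ▸ hq2V)
      rcases open_partition hq12 hz1 hz2 with h | h
      · exact Or.inl ⟨hz, h⟩
      · exact Or.inr ⟨hz, h⟩
    · rintro (⟨h, -⟩ | ⟨h, -⟩) <;> exact h
  have hdisj : Disjoint CA CB := by
    rw [Set.disjoint_left]
    rintro z ⟨-, h1⟩ ⟨-, h2⟩
    exact open_disjoint h1 h2
  have hxCA : x ∈ CA := ⟨hxC, hxO⟩
  have hyCB : y ∈ CB := ⟨hyC, hyO⟩
  have hxnB : x ∉ CB := fun h => open_disjoint hxO h.2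
  have hynA : y ∉ CA := fun h => open_disjoint h.2 hyO
  have hA1 : CA ⊂ C := ⟨Set.inter_subset_left, fun hsub => hynA (hsub hyC)⟩
  have hB1 : CB ⊂ C := ⟨Set.inter_subset_left, fun hsub => hxnB (hsub hxC)⟩
  have hA2 := circuit_ssubset_card hME hMI hC hA1
  have hB2 := circuit_ssubset_card hME hMI hC hB1
  have hdisjP : Disjoint (propsOf n Ps CA) (propsOf n Ps CB) := by
    rw [Set.disjoint_left]
    rintro p ⟨hpPs, u, huV, huA⟩ ⟨-, v, hvV, hvB⟩
    obtain ⟨p1, p2⟩ := p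
    have hnc := hcr (q1, q2) hqPs (p1, p2) hpPs
    rcases noncross_side hq12 hnc with ⟨h1, h2⟩ | ⟨h1, h2⟩
    · have hsub : ∀ z ∈ Vp n (p1, p2),
          z ∈ openCyclicInterval n q1 q2 ∨ z ∈ Vp n (q1, q2) := by
        intro z hz
        simp only [Vp, Set.mem_insert_iff, Set.mem_singleton_iff] at hz
        rcases hz with rfl | rfl | rfl | rfl
        · rcases arc_elem_cases h1 with h | h | h
          · exact Or.inl h
          · right; rw [h]; simp [Vp]
          · right; rw [h]; simp [Vp]
        · rcases arc_succ_cases h1 with h | h | h | h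
          · exact Or.inl h
          all_goals (right; rw [h]; simp [Vp])
        · rcases arc_elem_cases h2 with h | h | h
          · exact Or.inl h
          · right; rw [h]; simp [Vp]
          · right; rw [h]; simp [Vp]
        · rcases arc_succ_cases h2 with h | h | h | h
          · exact Or.inl h
          all_goals (right; rw [h]; simp [Vp])
      rcases hsub v hvV with h | h
      · exact open_disjoint h hvB.2
      · exact hCV v hvB.1 h
    · have hsub : ∀ z ∈ Vp n (p1, p2),
          z ∈ openCyclicInterval n q2 q1 ∨ z ∈ Vp n (q1, q2) := by
        intro z hz
        simp only [Vp, Set.mem_insert_iff, Set.mem_singleton_iff] at hz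
        rcases hz with rfl | rfl | rfl | rfl
        · rcases arc_elem_cases h1 with h | h | h
          · exact Or.inl h
          · right; rw [h]; simp [Vp]
          · right; rw [h]; simp [Vp]
        · rcases arc_succ_cases h1 with h | h | h | h
          · exact Or.inl h
          all_goals (right; rw [h]; simp [Vp])
        · rcases arc_elem_cases h2 with h | h | h
          · exact Or.inl h
          · right; rw [h]; simp [Vp]
          · right; rw [h]; simp [Vp]
        · rcases arc_succ_cases h2 with h | h | h | h
          · exact Or.inl h
          all_goals (right; rw [h]; simp [Vp])
      rcases hsub u huV with h | h
      · exact open_disjoint huA.2 h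
      · exact hCV u huA.1 h
  have hunion : propsOf n Ps CA ∪ propsOf n Ps CB ⊆ propsOf n Ps C :=
    Set.union_subset (propsOf_mono Set.inter_subset_left)
      (propsOf_mono Set.inter_subset_left)
  have h5 : C.ncard = CA.ncard + CB.ncard := by
    rw [hCsplit]
    exact Set.ncard_union_eq hdisj (Set.toFinite _) (Set.toFinite _)
  have h6 : (propsOf n Ps CA).ncard + (propsOf n Ps CB).ncard
      = (propsOf n Ps CA ∪ propsOf n Ps CB).ncard :=
    (Set.ncard_union_eq hdisjP (Set.toFinite _) (Set.toFinite _)).symm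
  have h7 := Set.ncard_le_ncard hunion (Set.toFinite _)
  have h8 := circuit_card hME hMI hC
  omega

lemma local_prop_SG (hW : WellDefinedWLD n Ps)
    (hcr : ∀ p ∈ Ps, ∀ q ∈ Ps, ¬ CrossingProps n p q)
    {F : Set (Fin n)}
    (hresF : ∀ x ∈ F, ∀ y ∈ F, x = y ∨ ∃ C, M.IsCircuitOf C ∧ C ⊆ F ∧ x ∈ C ∧ y ∈ C)
    {q : Fin n × Fin n} (hqPs : q ∈ Ps) (hqF : Vp n q ∩ F = ∅) :
    ∀ u ∈ Vp n q, ∀ v ∈ Vp n q, SG F u v := by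
  obtain ⟨s, t, h1, h2⟩ := local_prop_arc hME hMI hW hcr hresF hqPs hqF
  intro u hu v hv
  exact SG_of_arc h2 (h1 u hu) (h1 v hv)

end Sep

section Gap
set_option linter.unusedSectionVars false
variable {n : ℕ} [NeZero n]

lemma coord_inj {o x y : Fin n} (h : (x - o).val = (y - o).val) : x = y := by
  have : x - o = y - o := Fin.ext h
  exact sub_left_injective this

lemma coord_param {z0 x : Fin n} (k : ℕ) :
    x = z0 + (k : Fin n) ↔ (x - z0).val = k % n := by
  constructor
  · rintro rfl
    have : z0 + (k : Fin n) - z0 = (k : Fin n) := by abel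
    rw [this, Fin.val_natCast]
  · intro h
    have h2 : x - z0 = (k : Fin n) := by
      apply Fin.ext
      rw [h, Fin.val_natCast]
    have := sub_eq_iff_eq_add.1 h2
    rw [this]; abel

lemma z0_in_arc {z0 x y : Fin n} (hlt : (x - z0).val < (y - z0).val) :
    inArc y x z0 := by
  have ha := x.isLt; have hb := y.isLt; have hc := z0.isLt
  unfold inArc
  rw [val_sub, val_sub] at hlt ⊢
  split_ifs at * <;> omega

lemma arc_of_delta {z0 x y w : Fin n} (h1 : (x - z0).val ≤ (w - z0).val)
    (h2 : (w - z0).val ≤ (y - z0).val) : inArc x y w := by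
  have ha := x.isLt; have hb := y.isLt; have hc := z0.isLt; have hd := w.isLt
  unfold inArc
  rw [val_sub, val_sub] at h1 h2 ⊢
  split_ifs at * <;> omega

lemma exists_diff_gap {F : Set (Fin n)} (hne : F.Nonempty) (hco : Fᶜ.Nonempty)
    (hint : ¬ CyclicInterval n F) :
    ∃ c d : Fin n, c ∉ F ∧ d ∉ F ∧ ¬ SG F c d := by
  by_contra hcon
  push_neg at hcon
  apply hint
  obtain ⟨z0, hz0⟩ := hne
  set δ : Fin n → ℕ := fun x => (x - z0).val with hδ
  -- the key betweenness property of the complement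
  have key : ∀ x ∈ Fᶜ, ∀ y ∈ Fᶜ, ∀ w, δ x ≤ δ w → δ w ≤ δ y → w ∈ Fᶜ := by
    intro x hx y hy w hxw hwy
    rcases eq_or_lt_of_le (le_trans hxw hwy) with heq | hlt
    · -- δ x = δ y forces x = w = y side consideration
      have hxweq : δ x = δ w := le_antisymm hxw (by omega)
      have := coord_inj (o := z0) hxweq.symm
      rwa [← this] at hx
    · -- x ≠ y, and z0 ∈ [y,x] so the free arc must be [x,y]
      obtain ⟨-, -, hor⟩ := hcon x y hx hy
      rcases hor with hfree | hfree
      · exact hfree w (arc_of_delta hxw hwy)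
      · exact absurd (hfree z0 (z0_in_arc hlt)) (by simpa using hz0)
  -- extremal elements of the complement
  obtain ⟨xmin, hxminS, hmin⟩ := Set.exists_min_image Fᶜ δ (Set.toFinite _) hco
  obtain ⟨xmax, hxmaxS, hmax⟩ := Set.exists_max_image Fᶜ δ (Set.toFinite _) hco
  set m1 := δ xmin with hm1
  set m2 := δ xmax with hm2
  have hm1pos : 1 ≤ m1 := by
    rcases Nat.eq_zero_or_pos m1 with h | h
    · exfalso
      have hz00 : δ z0 = 0 := by simp [hδ]
      have hxz : xmin = z0 := coord_inj (o := z0) (show δ xmin = δ z0 by omega)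
      rw [hxz] at hxminS
      exact hxminS hz0
    · exact h
  have hm2lt : m2 < n := (xmax - z0).isLt
  have hm12 : m1 ≤ m2 := hmin xmax hxmaxS
  have hSchar : ∀ x, x ∈ Fᶜ ↔ (m1 ≤ δ x ∧ δ x ≤ m2) := by
    intro x
    constructor
    · intro hx
      exact ⟨hmin x hx, hmax x hx⟩
    · rintro ⟨h1, h2⟩
      exact key xmin hxminS xmax hxmaxS x h1 h2
  have hFchar : ∀ x, x ∈ F ↔ (δ x < m1 ∨ m2 < δ x) := by
    intro x
    have := hSchar x
    simp only [Set.mem_compl_iff] at this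
    constructor
    · intro hx
      by_contra hc
      push_neg at hc
      exact (this.2 ⟨by omega, by omega⟩) hx
    · intro hx
      by_contra hc
      have := this.1 hc
      omega
  -- construct the interval
  refine ⟨z0 + ((m2 + 1 : ℕ) : Fin n), n - (m2 - m1 + 1), ?_⟩
  ext x
  simp only [Set.mem_setOf_eq]
  have hx : δ x < n := (x - z0).isLt
  constructor
  · intro hxF
    rw [hFchar] at hxF
    rcases hxF with h | h
    · refine ⟨δ x + n - m2 - 1, by omega, ?_⟩
      rw [show z0 + ((m2 + 1 : ℕ) : Fin n) + ((δ x + n - m2 - 1 : ℕ) : Fin n)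
          = z0 + (((m2 + 1) + (δ x + n - m2 - 1) : ℕ) : Fin n) by push_cast; abel]
      rw [coord_param]
      have : (m2 + 1) + (δ x + n - m2 - 1) = δ x + n := by omega
      rw [this, Nat.add_mod_right, Nat.mod_eq_of_lt hx]
    · refine ⟨δ x - m2 - 1, by omega, ?_⟩
      rw [show z0 + ((m2 + 1 : ℕ) : Fin n) + ((δ x - m2 - 1 : ℕ) : Fin n)
          = z0 + (((m2 + 1) + (δ x - m2 - 1) : ℕ) : Fin n) by push_cast; abel]
      rw [coord_param]
      have : (m2 + 1) + (δ x - m2 - 1) = δ x := by omega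
      rw [this, Nat.mod_eq_of_lt hx]
  · rintro ⟨i, hi, rfl⟩
    rw [hFchar]
    have heq : δ (z0 + ((m2 + 1 : ℕ) : Fin n) + (i : Fin n)) = (m2 + 1 + i) % n := by
      show ((z0 + ((m2 + 1 : ℕ) : Fin n) + (i : Fin n)) - z0).val = _
      rw [← coord_param]
      push_cast
      abel
    rw [heq]
    rcases Nat.lt_or_ge (m2 + 1 + i) n with h | h
    · rw [Nat.mod_eq_of_lt h]
      omega
    · have h2 : (m2 + 1 + i) - n < n := by omega
      have h3 : m2 + 1 + i = ((m2 + 1 + i) - n) + n := by omega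
      rw [h3, Nat.add_mod_right, Nat.mod_eq_of_lt h2]
      omega

end Gap

section Contract
set_option linter.unusedSectionVars false
variable {n : ℕ} [NeZero n] {Ps : Set (Fin n × Fin n)} {M : Matroid (Fin n)}
variable (hME : M.E = Set.univ)
  (hMI : ∀ S : Set (Fin n), M.Indep S ↔ ∀ U ⊆ S, U.ncard ≤ (propsOf n Ps U).ncard)
variable {F : Set (Fin n)}

/-- key sub-lemma : any base of `M` avoiding a base `B'` of `M✶ ↾ (M.E \ F)`
contains all of `(M.E \ F) \ B'`. -/
lemma ksl (hB' : (M✶ ↾ (M.E \ F)).IsBase B') {B0 : Set (Fin n)} (hB0 : M.IsBase B0)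
    (hdisj : Disjoint B0 B') : (M.E \ F) \ B' ⊆ B0 := by
  intro x hx
  by_contra hxB0
  have hxE : x ∈ M.E := hx.1.1
  have hIns : (M✶ ↾ (M.E \ F)).Indep (insert x B') := by
    rw [restrict_indep_iff]
    constructor
    · rw [dual_indep_iff_exists
        (insert_subset hxE ((hB'.subset_ground).trans Set.diff_subset))]
      exact ⟨B0, hB0, by
        rw [Set.disjoint_left]
        rintro z (rfl | hz)
        · exact fun hc => hxB0 hc
        · exact fun hc => (Set.disjoint_right.1 hdisj hz) hc⟩
    · exact insert_subset hx.1 hB'.subset_ground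
  have := hB'.eq_of_subset_indep hIns (Set.subset_insert _ _)
  exact hx.2 (by rw [this]; exact Set.mem_insert _ _)

include hME hMI

/-- contraction independence implies extension by a basis of `F` (the "some basis" form). -/
lemma con_indep_extend (hFE : F ⊆ M.E) {J : Set (Fin n)}
    (hJ : ((M✶ ↾ (M.E \ F))✶).Indep J) :
    J ⊆ M.E \ F ∧ ∃ Bf, M.IsBasis Bf F ∧ M.Indep (J ∪ Bf) := by
  have hJX : J ⊆ M.E \ F := by
    have := hJ.subset_ground
    simpa using this
  refine ⟨hJX, ?_⟩
  rw [dual_indep_iff_exists (by simpa using hJX)] at hJ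
  obtain ⟨B', hB', hJB'⟩ := hJ
  have hB'X : B' ⊆ M.E \ F := hB'.subset_ground
  have hB'i : (M✶).Indep B' := (restrict_indep_iff.1 hB'.indep).1
  rw [dual_indep_iff_exists (hB'X.trans Set.diff_subset)] at hB'i
  obtain ⟨B1, hB1, hB1B'⟩ := hB'i
  have hJB1 : J ⊆ B1 := fun x hxJ =>
    ksl hB' hB1 hB1B'.symm ⟨hJX hxJ, Set.disjoint_left.1 hJB' hxJ⟩
  have hK : M.Indep (B1 ∩ F) := hB1.indep.subset Set.inter_subset_left
  obtain ⟨Bf, hBf, hKBf⟩ := hK.subset_isBasis_of_subset Set.inter_subset_right hFE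
  refine ⟨Bf, hBf, ?_⟩
  by_contra hdep
  obtain ⟨C0, hC0sub, hC0⟩ := dep_contains_circuit hME hMI hdep
  have hC0dep : ¬ M.Indep C0 := (dep_iff.1 hC0.1).1
  have hC0J : (C0 ∩ J).Nonempty := by
    rw [Set.nonempty_iff_ne_empty]
    intro hemp
    apply hC0dep
    refine hBf.indep.subset (fun z hz => ?_)
    rcases hC0sub hz with h | h
    · exact absurd (Set.eq_empty_iff_forall_notMem.1 hemp z ⟨hz, h⟩) not_false
    · exact h
  obtain ⟨e, heC0, heJ⟩ := hC0J
  have heX : e ∈ M.E \ F := hJX heJ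
  have hC0e : M.Indep (C0 \ {e}) :=
    circuit_ssubset_indep hME hMI hC0 (Set.sdiff_singleton_ssubset.2 heC0)
  have hecl : e ∈ M.closure (C0 \ {e}) := by
    rw [hC0e.mem_closure_iff]
    left
    rw [Set.insert_diff_singleton, Set.insert_eq_of_mem heC0]
    exact hC0.1
  have hecl2 : e ∈ M.closure ((J \ {e}) ∪ F) := by
    refine M.closure_subset_closure ?_ hecl
    intro z hz
    rcases hC0sub hz.1 with h | h
    · exact Or.inl ⟨h, hz.2⟩
    · exact Or.inr (hBf.subset h)
  -- build a basis of (J \ {e}) ∪ F and a base avoiding e and B'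
  have hJKi : M.Indep ((J \ {e}) ∪ (B1 ∩ F)) :=
    hB1.indep.subset (Set.union_subset ((Set.diff_subset).trans hJB1) Set.inter_subset_left)
  have hWE : (J \ {e}) ∪ F ⊆ M.E := Set.union_subset ((Set.diff_subset).trans (hJX.trans Set.diff_subset)) hFE
  obtain ⟨Bw, hBw, hBwsub⟩ := hJKi.subset_isBasis_of_subset
    (Set.union_subset_union Set.Subset.rfl Set.inter_subset_right) hWE
  have heBw : e ∈ M.closure Bw := by
    rw [hBw.closure_eq_closure]
    exact hecl2
  obtain ⟨B5, hB5, hBwB5, hB5sub⟩ := hBw.indep.exists_isBase_subset_union_isBase hB1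
  have heB5 : e ∉ B5 := by
    intro heB5
    have : M.Indep (insert e Bw) := hB5.indep.subset (Set.insert_subset heB5 hBwB5)
    rw [hBw.indep.mem_closure_iff] at heBw
    rcases heBw with h | h
    · exact h.not_indep this
    · exact (hBw.subset h).elim (fun hh => hh.2 rfl) (fun hh => heX.2 hh)
  have hB5B' : Disjoint B5 B' := by
    rw [Set.disjoint_left]
    intro z hz hzB'
    rcases hB5sub hz with h | h
    · rcases hBw.subset h with hh | hh
      · exact Set.disjoint_left.1 hJB' hh.1 hzB'
      · exact (hB'X hzB').2 hh
    · exact Set.disjoint_left.1 hB1B'.symm h hzB'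
  exact heB5 (ksl hB' hB5 hB5B' ⟨heX, Set.disjoint_left.1 hJB' heJ⟩)

/-- transferring independence between bases of `F`. -/
lemma basis_transfer {B0 B J : Set (Fin n)} (hB0 : M.IsBasis B0 F) (hB : M.IsBasis B F)
    (hJF : Disjoint J F) (h : M.Indep (J ∪ B0)) : M.Indep (J ∪ B) := by
  by_contra hdep
  obtain ⟨C0, hC0sub, hC0⟩ := dep_contains_circuit hME hMI hdep
  have hC0dep : ¬ M.Indep C0 := (dep_iff.1 hC0.1).1
  have hC0J : (C0 ∩ J).Nonempty := by
    rw [Set.nonempty_iff_ne_empty]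
    intro hemp
    apply hC0dep
    refine hB.indep.subset (fun z hz => ?_)
    rcases hC0sub hz with h' | h'
    · exact absurd (Set.eq_empty_iff_forall_notMem.1 hemp z ⟨hz, h'⟩) not_false
    · exact h'
  obtain ⟨e, heC0, heJ⟩ := hC0J
  have hC0e : M.Indep (C0 \ {e}) :=
    circuit_ssubset_indep hME hMI hC0 (Set.sdiff_singleton_ssubset.2 heC0)
  have hecl : e ∈ M.closure (C0 \ {e}) := by
    rw [hC0e.mem_closure_iff]
    left
    rw [Set.insert_diff_singleton, Set.insert_eq_of_mem heC0]
    exact hC0.1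
  have hecl2 : e ∈ M.closure ((J \ {e}) ∪ B0) := by
    have h1 : e ∈ M.closure ((J \ {e}) ∪ F) := by
      refine M.closure_subset_closure ?_ hecl
      intro z hz
      rcases hC0sub hz.1 with h' | h'
      · exact Or.inl ⟨h', hz.2⟩
      · exact Or.inr (hB.subset h')
    have h2 : M.closure ((J \ {e}) ∪ F) = M.closure ((J \ {e}) ∪ B0) := by
      rw [← closure_union_closure_right_eq, ← hB0.closure_eq_closure,
        closure_union_closure_right_eq]
    rwa [h2] at h1
  have : e ∉ M.closure ((J ∪ B0) \ {e}) := h.notMem_closure_diff_of_mem (Or.inl heJ)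
  apply this
  refine M.closure_subset_closure ?_ hecl2
  intro z hz
  rcases hz with hz | hz
  · exact ⟨Or.inl hz.1, hz.2⟩
  · refine ⟨Or.inr hz, ?_⟩
    intro hrfl
    rw [Set.mem_singleton_iff] at hrfl
    subst hrfl
    exact Set.disjoint_left.1 hJF heJ (hB0.subset hz)

/-- independence extension implies contraction independence. -/
lemma con_indep_of_indep (hFE : F ⊆ M.E) {J Bf : Set (Fin n)} (hJX : J ⊆ M.E \ F)
    (hBf : M.IsBasis Bf F) (h : M.Indep (J ∪ Bf)) :
    ((M✶ ↾ (M.E \ F))✶).Indep J := by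
  obtain ⟨B1, hB1, hJBf1⟩ := h.exists_isBase_superset
  have hBfB1 : Bf ⊆ B1 := (Set.subset_union_right).trans hJBf1
  have hJB1 : J ⊆ B1 := (Set.subset_union_left).trans hJBf1
  rw [dual_indep_iff_exists (by simpa using hJX)]
  refine ⟨(M.E \ F) \ B1, ?_, by
    rw [Set.disjoint_left]; exact fun z hz hz2 => hz2.2 (hJB1 hz)⟩
  rw [isBase_restrict_iff']
  constructor
  · constructor
    · rw [dual_indep_iff_exists (Set.diff_subset.trans Set.diff_subset)]
      refine ⟨B1, hB1, ?_⟩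
      rw [Set.disjoint_left]
      exact fun z hz hz2 => hz.2 hz2
    · exact Set.diff_subset
  · rintro y ⟨hyi, hyX⟩ hsub
    intro x hxy
    by_contra hxB'
    have hxX : x ∈ M.E \ F := hyX hxy
    have hxB1 : x ∈ B1 := by
      by_contra hc
      exact hxB' ⟨hxX, hc⟩
    have hIns : (M✶).Indep (insert x ((M.E \ F) \ B1)) := hyi.subset (Set.insert_subset hxy hsub)
    rw [dual_indep_iff_exists (Set.insert_subset hxX.1 (Set.diff_subset.trans Set.diff_subset))] at hIns
    obtain ⟨B3, hB3, hB3disj⟩ := hIns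
    have hB3sub : B3 ⊆ (F ∪ (B1 \ {x})) := by
      intro z hz
      have hzE : z ∈ M.E := hB3.subset_ground hz
      have hznotin : z ∉ insert x ((M.E \ F) \ B1) := Set.disjoint_right.1 hB3disj hz
      by_cases hzF : z ∈ F
      · exact Or.inl hzF
      · right
        constructor
        · by_contra hzB1
          exact hznotin (Or.inr ⟨⟨hzE, hzF⟩, hzB1⟩)
        · intro hzx
          rw [Set.mem_singleton_iff] at hzx
          subst hzx
          exact hznotin (Or.inl rfl)
    have hclB3 : M.closure B3 ⊆ M.closure (B1 \ {x}) := by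
      have h1 : M.closure (F ∪ (B1 \ {x})) = M.closure (Bf ∪ (B1 \ {x})) := by
        rw [← closure_union_closure_left_eq, hBf.closure_eq_closure.symm,
          closure_union_closure_left_eq]
      have h2 : Bf ∪ (B1 \ {x}) = B1 \ {x} := by
        apply Set.union_eq_self_of_subset_left
        intro z hz
        exact ⟨hBfB1 hz, fun hzx => (by
          rw [Set.mem_singleton_iff] at hzx
          subst hzx
          exact hxX.2 (hBf.subset hz))⟩
      calc M.closure B3 ⊆ M.closure (F ∪ (B1 \ {x})) := M.closure_subset_closure hB3sub
      _ = M.closure (B1 \ {x}) := by rw [h1, h2]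
    have hxcl : x ∈ M.closure (B1 \ {x}) := by
      apply hclB3
      rw [hB3.closure_eq]
      exact hxX.1
    exact hB1.indep.notMem_closure_diff_of_mem hxB1 hxcl

/-- lifting a circuit of the contraction to a circuit of `M`. -/
lemma con_circuit_lift (hFE : F ⊆ M.E) {C' Bf : Set (Fin n)}
    (hC' : ((M✶ ↾ (M.E \ F))✶).IsCircuitOf C') (hBf : M.IsBasis Bf F) :
    ∃ D, M.IsCircuitOf D ∧ C' ⊆ D ∧ D ⊆ C' ∪ Bf := by
  have hC'X : C' ⊆ M.E \ F := by
    have := hC'.1.subset_ground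
    simpa using this
  have hdep : ¬ M.Indep (C' ∪ Bf) := by
    intro h
    exact ((dep_iff.1 hC'.1).1) (con_indep_of_indep hME hMI hFE hC'X hBf h)
  obtain ⟨D, hDsub, hD⟩ := dep_contains_circuit hME hMI hdep
  refine ⟨D, hD, ?_, hDsub⟩
  by_contra hc
  rw [Set.not_subset] at hc
  obtain ⟨x, hxC', hxD⟩ := hc
  have hssub : C' \ {x} ⊂ C' := Set.sdiff_singleton_ssubset.2 hxC'
  have hindep : ((M✶ ↾ (M.E \ F))✶).Indep (C' \ {x}) := by
    have hnd := hC'.2 _ hssub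
    by_contra hni
    exact hnd (dep_iff.2 ⟨hni, (Set.diff_subset.trans hC'X).trans (by simp)⟩)
  obtain ⟨-, Bf0, hBf0, hind0⟩ := con_indep_extend hME hMI hFE hindep
  have hind : M.Indep ((C' \ {x}) ∪ Bf) := by
    refine basis_transfer hME hMI hBf0 hBf ?_ hind0
    rw [Set.disjoint_left]
    exact fun z hz => ((Set.diff_subset.trans hC'X) hz).2
  apply (dep_iff.1 hD.1).1
  refine hind.subset (fun z hz => ?_)
  rcases hDsub hz with h | h
  · left
    refine ⟨h, fun hzx => ?_⟩
    rw [Set.mem_singleton_iff] at hzx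
    subst hzx
    exact hxD hz
  · exact Or.inr h

end Contract

section HallPart
set_option linter.unusedSectionVars false
lemma propsOf_union_eq {n : ℕ} [NeZero n] {Ps : Set (Fin n × Fin n)} (S T : Set (Fin n)) :
    propsOf n Ps (S ∪ T) = propsOf n Ps S ∪ propsOf n Ps T := by
  ext p
  simp only [propsOf, Set.mem_setOf_eq, Set.mem_union]
  constructor
  · rintro ⟨hp, z, hz1, (hz2 | hz2)⟩
    · exact Or.inl ⟨hp, z, hz1, hz2⟩
    · exact Or.inr ⟨hp, z, hz1, hz2⟩
  · rintro (⟨hp, z, hz1, hz2⟩ | ⟨hp, z, hz1, hz2⟩)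
    · exact ⟨hp, z, hz1, Or.inl hz2⟩
    · exact ⟨hp, z, hz1, Or.inr hz2⟩

variable {n : ℕ} [NeZero n] {Ps : Set (Fin n × Fin n)} {M : Matroid (Fin n)}
variable (hME : M.E = Set.univ)
  (hMI : ∀ S : Set (Fin n), M.Indep S ↔ ∀ U ⊆ S, U.ncard ≤ (propsOf n Ps U).ncard)

include hME hMI

lemma deficiency_max {F : Set (Fin n)}
    (hcyc : ∀ x ∈ F, ∃ C, M.IsCircuitOf C ∧ C ⊆ F ∧ x ∈ C) :
    ∀ U ⊆ F, (U.ncard : ℤ) - ((propsOf n Ps U).ncard : ℤ)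
      ≤ (F.ncard : ℤ) - ((propsOf n Ps F).ncard : ℤ) := by
  obtain ⟨U, hUF, hUmax⟩ := Set.exists_max_image {U : Set (Fin n) | U ⊆ F}
    (fun U => (U.ncard : ℤ) - ((propsOf n Ps U).ncard : ℤ)) (Set.toFinite _)
    ⟨∅, Set.empty_subset F⟩
  have hFU : F ⊆ U := by
    intro x hx
    by_contra hxU
    obtain ⟨C, hC, hCF, hxC⟩ := hcyc x hx
    have hCUss : C ∩ U ⊂ C :=
      ⟨Set.inter_subset_left, fun hsub => hxU ((hsub hxC).2)⟩
    have h1 : (C ∩ U).ncard ≤ (propsOf n Ps (C ∩ U)).ncard :=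
      circuit_ssubset_card hME hMI hC hCUss
    have h2 : C.ncard = (propsOf n Ps C).ncard + 1 := circuit_card hME hMI hC
    have hPU : propsOf n Ps (U ∪ C) = propsOf n Ps U ∪ propsOf n Ps C :=
      propsOf_union_eq U C
    have hsub2 : propsOf n Ps U ∪ propsOf n Ps C ⊆
        propsOf n Ps U ∪ (propsOf n Ps C \ propsOf n Ps (C ∩ U)) := by
      rintro p (hp | hp)
      · exact Or.inl hp
      · by_cases hpu : p ∈ propsOf n Ps U
        · exact Or.inl hpu
        · exact Or.inr ⟨hp, fun hmem => hpu (propsOf_mono Set.inter_subset_right hmem)⟩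
    have hc1 : (propsOf n Ps (U ∪ C)).ncard ≤
        (propsOf n Ps U).ncard + (propsOf n Ps C \ propsOf n Ps (C ∩ U)).ncard := by
      calc (propsOf n Ps (U ∪ C)).ncard
          ≤ (propsOf n Ps U ∪ (propsOf n Ps C \ propsOf n Ps (C ∩ U))).ncard := by
            rw [hPU]; exact Set.ncard_le_ncard hsub2 (Set.toFinite _)
        _ ≤ _ := Set.ncard_union_le _ _
    have hc2 : (propsOf n Ps C \ propsOf n Ps (C ∩ U)).ncard
        = (propsOf n Ps C).ncard - (propsOf n Ps (C ∩ U)).ncard :=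
      Set.ncard_diff (propsOf_mono Set.inter_subset_left) (Set.toFinite _)
    have hc3 : (propsOf n Ps (C ∩ U)).ncard ≤ (propsOf n Ps C).ncard :=
      Set.ncard_le_ncard (propsOf_mono Set.inter_subset_left) (Set.toFinite _)
    have hc4 : (U ∪ C).ncard = U.ncard + (C \ U).ncard := by
      rw [← Set.union_diff_self]
      exact Set.ncard_union_eq disjoint_sdiff_right (Set.toFinite _) (Set.toFinite _)
    have hc5 : (C ∩ U).ncard + (C \ U).ncard = C.ncard :=
      Set.ncard_inter_add_ncard_diff_eq_ncard C U (Set.toFinite _)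
    have hle := hUmax (U ∪ C) (Set.union_subset hUF hCF)
    omega
  have hUeq : U = F := Set.Subset.antisymm hUF hFU
  intro V hVF
  have := hUmax V hVF
  rwa [hUeq] at this

lemma exists_basis_propcard {F : Set (Fin n)}
    (hcyc : ∀ x ∈ F, ∃ C, M.IsCircuitOf C ∧ C ⊆ F ∧ x ∈ C) (hFne : F.Nonempty) :
    ∃ I, M.IsBasis I F ∧ I.ncard = (propsOf n Ps F).ncard := by
  classical
  have hFE' : F ⊆ M.E := by rw [hME]; exact Set.subset_univ _
  have hmax := deficiency_max hME hMI hcyc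
  set g := (propsOf n Ps F).ncard with hg
  obtain ⟨x0, hx0⟩ := hFne
  obtain ⟨C0, hC0, hC0F, -⟩ := hcyc x0 hx0
  have hC0card := circuit_card hME hMI hC0
  have hfC0 := hmax C0 hC0F
  have hgF : g + 1 ≤ F.ncard := by omega
  set d := F.ncard - g with hd
  have hdpos : 1 ≤ d := by omega
  have hzero : (0 : ℕ) < d := hdpos
  let propsF : ↥F → Finset (Fin n × Fin n) :=
    fun x => (Set.toFinite (propsOf n Ps {x.val})).toFinset
  let t : ↥F → Finset ((Fin n × Fin n) ⊕ Fin d) :=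
    fun x => (propsF x).image Sum.inl ∪ (Finset.univ : Finset (Fin d)).image Sum.inr
  have hall : ∀ s : Finset ↥F, s.card ≤ (s.biUnion t).card := by
    intro s
    rcases Finset.eq_empty_or_nonempty s with rfl | hs
    · simp
    set U : Set (Fin n) := ↑(s.image Subtype.val) with hU
    have hUF : U ⊆ F := by
      rintro z hz
      rw [hU, Finset.coe_image] at hz
      obtain ⟨x, -, rfl⟩ := hz
      exact x.2
    have hcard : s.card = U.ncard := by
      rw [hU, Set.ncard_coe_finset, Finset.card_image_of_injective _ Subtype.val_injective]
    have hsub1 : ((s.biUnion propsF).image Sum.inl : Finset ((Fin n × Fin n) ⊕ Fin d))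
        ⊆ s.biUnion t := by
      intro z hz
      rw [Finset.mem_image] at hz
      obtain ⟨p, hp, rfl⟩ := hz
      rw [Finset.mem_biUnion] at hp ⊢
      obtain ⟨x, hx, hpx⟩ := hp
      exact ⟨x, hx, Finset.mem_union_left _ (Finset.mem_image_of_mem _ hpx)⟩
    have hsub2 : ((Finset.univ : Finset (Fin d)).image Sum.inr :
        Finset ((Fin n × Fin n) ⊕ Fin d)) ⊆ s.biUnion t := by
      obtain ⟨x, hx⟩ := hs
      intro z hz
      rw [Finset.mem_biUnion]
      exact ⟨x, hx, Finset.mem_union_right _ hz⟩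
    have hdisj2 : Disjoint ((s.biUnion propsF).image Sum.inl :
        Finset ((Fin n × Fin n) ⊕ Fin d)) ((Finset.univ : Finset (Fin d)).image Sum.inr) := by
      rw [Finset.disjoint_left]
      rintro z hz1 hz2
      rw [Finset.mem_image] at hz1 hz2
      obtain ⟨p, -, rfl⟩ := hz1
      obtain ⟨j, -, hj⟩ := hz2
      exact Sum.inl_ne_inr hj.symm
    have hge : (s.biUnion propsF).card + d ≤ (s.biUnion t).card := by
      have h1 := Finset.card_union_of_disjoint hdisj2
      have h2 := Finset.card_le_card (Finset.union_subset hsub1 hsub2)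
      rw [h1] at h2
      rw [Finset.card_image_of_injective _ Sum.inl_injective,
        Finset.card_image_of_injective _ Sum.inr_injective, Finset.card_univ,
        Fintype.card_fin] at h2
      exact h2
    have hbiU : (((s.biUnion propsF) : Finset (Fin n × Fin n)) : Set (Fin n × Fin n))
        = propsOf n Ps U := by
      ext p
      rw [Finset.mem_coe, Finset.mem_biUnion]
      constructor
      · rintro ⟨x, hx, hpx⟩
        rw [Set.Finite.mem_toFinset] at hpx
        obtain ⟨hpPs, z, hz1, hz2⟩ := hpx
        rw [Set.mem_singleton_iff] at hz2
        subst hz2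
        refine ⟨hpPs, x.val, hz1, ?_⟩
        rw [hU, Finset.coe_image]
        exact ⟨x, hx, rfl⟩
      · rintro ⟨hpPs, z, hz1, hz2⟩
        rw [hU, Finset.coe_image] at hz2
        obtain ⟨x, hx, rfl⟩ := hz2
        refine ⟨x, hx, ?_⟩
        rw [Set.Finite.mem_toFinset]
        exact ⟨hpPs, x.val, hz1, rfl⟩
    have hcardb : (s.biUnion propsF).card = (propsOf n Ps U).ncard := by
      rw [← hbiU, Set.ncard_coe_finset]
    have hm := hmax U hUF
    omega
  obtain ⟨φ, hφinj, hφmem⟩ := (Finset.all_card_le_biUnion_card_iff_exists_injective t).1 hall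
  let Φ : Fin n → (Fin n × Fin n) ⊕ Fin d :=
    fun u => if h : u ∈ F then φ ⟨u, h⟩ else Sum.inr ⟨0, hzero⟩
  have hΦF : ∀ u (h : u ∈ F), Φ u = φ ⟨u, h⟩ := fun u h => dif_pos h
  have hΦinj : Set.InjOn Φ F := by
    intro u hu v hv h
    rw [hΦF u hu, hΦF v hv] at h
    have := hφinj h
    exact congrArg Subtype.val this
  set I : Set (Fin n) := {u | u ∈ F ∧ (Φ u).isLeft} with hI
  have hIF : I ⊆ F := fun u hu => hu.1
  have hIprop : ∀ u ∈ I, ∃ p, Φ u = Sum.inl p ∧ p ∈ propsOf n Ps {u} := by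
    rintro u ⟨hu1, hu2⟩
    have hmem := hφmem ⟨u, hu1⟩
    rw [← hΦF u hu1] at hmem
    cases hφ : Φ u with
    | inr j => rw [hφ] at hu2; simp at hu2
    | inl p =>
      refine ⟨p, rfl, ?_⟩
      rw [hφ] at hmem
      rw [Finset.mem_union] at hmem
      rcases hmem with hmem | hmem
      · rw [Finset.mem_image] at hmem
        obtain ⟨q, hq, hqeq⟩ := hmem
        have : q = p := Sum.inl_injective hqeq
        subst this
        rw [Set.Finite.mem_toFinset] at hq
        exact hq
      · rw [Finset.mem_image] at hmem
        obtain ⟨j, -, hj⟩ := hmem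
        exact absurd hj (Sum.inr_ne_inl)
  have hIind : M.Indep I := by
    rw [hMI]
    intro U hUI
    have hmapsto : ∀ u ∈ U,
        (Sum.elim id (fun _ => ((0 : Fin n), (0 : Fin n))) (Φ u)) ∈ propsOf n Ps U := by
      intro u hu
      obtain ⟨p, hp1, hp2⟩ := hIprop u (hUI hu)
      rw [hp1]
      simp only [Sum.elim_inl, id]
      exact propsOf_mono (Set.singleton_subset_iff.2 hu) hp2
    refine Set.ncard_le_ncard_of_injOn _ hmapsto ?_ (Set.toFinite _)
    intro u hu v hv h
    dsimp only at h
    obtain ⟨p, hp1, -⟩ := hIprop u (hUI hu)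
    obtain ⟨q, hq1, -⟩ := hIprop v (hUI hv)
    rw [hp1, hq1] at h
    simp only [Sum.elim_inl, id] at h
    subst h
    exact hΦinj (hIF (hUI hu)) (hIF (hUI hv)) (by rw [hp1, hq1])
  have hIcard_ge : g ≤ I.ncard := by
    set Fc : Set (Fin n) := {u | u ∈ F ∧ ¬(Φ u).isLeft} with hFc
    have hsplit : F ⊆ I ∪ Fc := by
      intro u hu
      by_cases h : (Φ u).isLeft
      · exact Or.inl ⟨hu, h⟩
      · exact Or.inr ⟨hu, h⟩
    have hFcd : Fc.ncard ≤ d := by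
      have hmapsto : ∀ u ∈ Fc,
          (Sum.elim (fun _ => (⟨0, hzero⟩ : Fin d)) id (Φ u)) ∈ (Set.univ : Set (Fin d)) :=
        fun u _ => Set.mem_univ _
      have hinj : Set.InjOn (fun u => Sum.elim (fun _ => (⟨0, hzero⟩ : Fin d)) id (Φ u)) Fc := by
        rintro u ⟨hu1, hu2⟩ v ⟨hv1, hv2⟩ h
        cases hφu : Φ u with
        | inl p => rw [hφu] at hu2; simp at hu2
        | inr j =>
          cases hφv : Φ v with
          | inl p => rw [hφv] at hv2; simp at hv2
          | inr k =>
            simp only [hφu, hφv, Sum.elim_inr, id] at h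
            subst h
            exact hΦinj hu1 hv1 (by rw [hφu, hφv])
      have := Set.ncard_le_ncard_of_injOn _ hmapsto hinj (Set.toFinite _)
      rwa [Set.ncard_univ, Nat.card_eq_fintype_card, Fintype.card_fin] at this
    have hFle : F.ncard ≤ I.ncard + Fc.ncard :=
      le_trans (Set.ncard_le_ncard hsplit (Set.toFinite _)) (Set.ncard_union_le _ _)
    omega
  have hIcard_le : I.ncard ≤ g := by
    have h1 := (hMI I).1 hIind I (le_refl _)
    have h2 : (propsOf n Ps I).ncard ≤ g :=
      Set.ncard_le_ncard (propsOf_mono hIF) (Set.toFinite _)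
    omega
  have hIcard : I.ncard = g := le_antisymm hIcard_le hIcard_ge
  refine ⟨I, ?_, hIcard⟩
  rw [isBasis_iff hFE']
  refine ⟨hIind, hIF, ?_⟩
  intro J hJ hIJ hJF
  apply Set.eq_of_subset_of_ncard_le hIJ _ (Set.toFinite _)
  have h1 := (hMI J).1 hJ J (le_refl _)
  have h2 : (propsOf n Ps J).ncard ≤ g :=
    Set.ncard_le_ncard (propsOf_mono hJF) (Set.toFinite _)
  omega

end HallPart

/-- Let `W = (Ps, n)` be a well-defined Wilson loop diagram with
`V_Ps = Fin n` whose matroid `M = M(W)` is connected. If `P ⊆ Ps` is nonempty and proper,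
`F(P)` is a flacet of `M` (a union of circuits with `M ↾ F(P)` and `M / F(P)` both
connected), and `F(P)` is not a cyclic interval, then `W` has two crossing propagators. -/
theorem non_interval_flacet_implies_crossing (n : ℕ) [NeZero n]
    (Ps : Set (Fin n × Fin n)) (hW : WellDefinedWLD n Ps) (hcover : VP n Ps = Set.univ)
    (M : Matroid (Fin n)) (hME : M.E = Set.univ)
    (hMI : ∀ S : Set (Fin n), M.Indep S ↔ ∀ U ⊆ S, U.ncard ≤ (propsOf n Ps U).ncard)
    (hconn : M.Conn)
    (P : Set (Fin n × Fin n)) (hP : P ⊆ Ps) (hPne : P.Nonempty) (hPproper : P ≠ Ps)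
    (hcyc : M.UnionOfCircuits (FP n Ps P))
    (hres : (M ↾ FP n Ps P).Conn)
    (hcon : (M.contractBy (FP n Ps P)).Conn)
    (hnotint : ¬ CyclicInterval n (FP n Ps P)) :
    ∃ p ∈ Ps, ∃ q ∈ Ps, CrossingProps n p q := by
  by_contra hcross
  push_neg at hcross
  set F := FP n Ps P with hF
  have hFE' : F ⊆ M.E := by rw [hME]; exact Set.subset_univ _
  -- supports of propagators outside P avoid F
  have hDisjF : ∀ q ∈ Ps, q ∉ P → Vp n q ∩ F = ∅ := by
    intro q hqPs hqP
    rw [Set.eq_empty_iff_forall_notMem]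
    rintro z ⟨hz1, hz2⟩
    apply hz2.2
    exact Set.mem_biUnion (⟨hqPs, hqP⟩ : q ∈ Ps \ P) hz1
  -- F is nonempty
  have hFne : F.Nonempty := by
    have := hres.1
    rwa [restrict_ground_eq] at this
  -- complement of F is nonempty
  have hFco : Fᶜ.Nonempty := by
    obtain ⟨q0, hq0Ps, hq0P⟩ := Set.exists_of_ssubset (ssubset_of_subset_of_ne hP hPproper)
    refine ⟨q0.1, fun hmem => ?_⟩
    exact Set.eq_empty_iff_forall_notMem.1 (hDisjF q0 hq0Ps hq0P) q0.1 ⟨q1_mem_Vp q0, hmem⟩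
  -- restriction connectivity gives common circuits inside F
  have hresF : ∀ x ∈ F, ∀ y ∈ F, x = y ∨ ∃ C, M.IsCircuitOf C ∧ C ⊆ F ∧ x ∈ C ∧ y ∈ C := by
    intro x hx y hy
    rcases hres.2 x (by rwa [restrict_ground_eq]) y (by rwa [restrict_ground_eq]) with h | ⟨C, hC, hxC, hyC⟩
    · exact Or.inl h
    · right
      have hCdep := restrict_dep_iff.1 hC.1
      refine ⟨C, ⟨dep_iff.2 ⟨hCdep.1, by rw [hME]; exact Set.subset_univ _⟩, ?_⟩, hCdep.2, hxC, hyC⟩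
      intro S hS hSdep
      refine hC.2 S hS (restrict_dep_iff.2 ⟨(dep_iff.1 hSdep).1, hS.subset.trans hCdep.2⟩)
  -- locality of propagators avoiding F
  have hSGprops : ∀ q ∈ Ps, Vp n q ∩ F = ∅ → ∀ u ∈ Vp n q, ∀ v ∈ Vp n q, SG F u v :=
    fun q hq hqF => local_prop_SG hME hMI hW hcross hresF hq hqF
  -- two vertices in different gaps
  obtain ⟨c, d, hcF, hdF, hnSG⟩ := exists_diff_gap hFne hFco hnotint
  -- the contraction ground set
  have hconE : (M.contractBy F).E = M.E \ F := by
    show ((M✶ ↾ (M.E \ F))✶).E = M.E \ F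
    rw [dual_ground, restrict_ground_eq]
  have hcd : c ≠ d := by
    rintro rfl
    exact hnSG (SG_refl hcF)
  -- a circuit of the contraction through c and d
  have hcE : c ∈ (M.contractBy F).E := by rw [hconE, hME]; exact ⟨Set.mem_univ _, hcF⟩
  have hdE : d ∈ (M.contractBy F).E := by rw [hconE, hME]; exact ⟨Set.mem_univ _, hdF⟩
  rcases hcon.2 c hcE d hdE with h | ⟨C', hC', hcC', hdC'⟩
  · exact hcd h
  have hC'X : C' ⊆ M.E \ F := by
    have := hC'.1.subset_ground
    rwa [hconE] at this
  -- every vertex of F lies in a circuit inside F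
  have hcycF : ∀ x ∈ F, ∃ C, M.IsCircuitOf C ∧ C ⊆ F ∧ x ∈ C := by
    intro x hx
    obtain ⟨𝒞, h𝒞, hFeq⟩ := hcyc
    rw [hFeq] at hx
    obtain ⟨C, hC𝒞, hxC⟩ := hx
    have hsub : C ⊆ F := by
      have h1 : C ⊆ ⋃₀ 𝒞 := Set.subset_sUnion_of_mem hC𝒞
      rwa [← hFeq] at h1
    exact ⟨C, h𝒞 C hC𝒞, hsub, hxC⟩
  -- a basis of F of size |Prop(F)|
  obtain ⟨I, hIbasis, hIcard⟩ := exists_basis_propcard hME hMI hcycF hFne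
  set g := (propsOf n Ps F).ncard with hg
  -- lift C' to a circuit D of M
  have hC'' : ((M✶ ↾ (M.E \ F))✶).IsCircuitOf C' := hC'
  obtain ⟨D, hD, hC'D, hDsub⟩ := con_circuit_lift hME hMI hFE' hC'' hIbasis
  have hIF : I ⊆ F := hIbasis.subset
  have hDdiff : D \ F = C' := by
    apply Set.Subset.antisymm
    · intro z hz
      rcases hDsub hz.1 with h | h
      · exact h
      · exact absurd (hIF h) hz.2
    · intro z hz
      exact ⟨hC'D hz, (hC'X hz).2⟩
  have hDF : D ∩ F ⊆ D := Set.inter_subset_left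
  -- counting (1)
  set GapC : Set (Fin n) := {v | SG F v c} with hGapC
  set U1 : Set (Fin n) := D ∩ (F ∪ GapC) with hU1
  set U2 : Set (Fin n) := D ∩ (F ∪ GapCᶜ) with hU2
  have hU1U2union : U1 ∪ U2 = D := by
    apply Set.Subset.antisymm
    · rintro z (⟨hz, -⟩ | ⟨hz, -⟩) <;> exact hz
    · intro z hz
      by_cases hzF : z ∈ F
      · exact Or.inl ⟨hz, Or.inl hzF⟩
      · by_cases hzG : z ∈ GapC
        · exact Or.inl ⟨hz, Or.inr hzG⟩
        · exact Or.inr ⟨hz, Or.inr hzG⟩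
  have hU1U2inter : U1 ∩ U2 = D ∩ F := by
    apply Set.Subset.antisymm
    · rintro z ⟨⟨hzD, hz1⟩, ⟨-, hz2⟩⟩
      refine ⟨hzD, ?_⟩
      rcases hz1 with h | h
      · exact h
      · rcases hz2 with h2 | h2
        · exact h2
        · exact absurd h h2
    · rintro z ⟨hzD, hzF⟩
      exact ⟨⟨hzD, Or.inl hzF⟩, ⟨hzD, Or.inl hzF⟩⟩
  have hcD : c ∈ D := hC'D hcC'
  have hdD : d ∈ D := hC'D hdC'
  have hcU1 : c ∈ U1 := ⟨hcD, Or.inr (SG_refl hcF)⟩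
  have hcU2 : c ∉ U2 := by
    rintro ⟨-, (h | h)⟩
    · exact hcF h
    · exact h (SG_refl hcF)
  have hdU2 : d ∈ U2 := ⟨hdD, Or.inr (fun hSG => hnSG (SG_symm hSG))⟩
  have hdU1 : d ∉ U1 := by
    rintro ⟨-, (h | h)⟩
    · exact hdF h
    · exact hnSG (SG_symm h)
  have hU1ss : U1 ⊂ D := ⟨Set.inter_subset_left, fun hs => hdU1 (hs hdD)⟩
  have hU2ss : U2 ⊂ D := ⟨Set.inter_subset_left, fun hs => hcU2 (hs hcD)⟩
  have hU1le := circuit_ssubset_card hME hMI hD hU1ss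
  have hU2le := circuit_ssubset_card hME hMI hD hU2ss
  have hPint : propsOf n Ps U1 ∩ propsOf n Ps U2 ⊆ propsOf n Ps F ∩ propsOf n Ps D := by
    rintro p ⟨⟨hpPs, u1, hu1V, hu1U⟩, ⟨-, u2, hu2V, hu2U⟩⟩
    refine ⟨⟨hpPs, ?_⟩, ⟨hpPs, u1, hu1V, hu1U.1⟩⟩
    by_contra hpF
    have hVpF : Vp n p ∩ F = ∅ := by
      rw [Set.eq_empty_iff_forall_notMem]
      exact fun z hz => hpF ⟨z, hz⟩
    have hu1F : u1 ∉ F := fun h => (Set.eq_empty_iff_forall_notMem.1 hVpF u1) ⟨hu1V, h⟩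
    have hu2F : u2 ∉ F := fun h => (Set.eq_empty_iff_forall_notMem.1 hVpF u2) ⟨hu2V, h⟩
    have hu1G : u1 ∈ GapC := by
      rcases hu1U.2 with h | h
      · exact absurd h hu1F
      · exact h
    have hu2G : u2 ∉ GapC := by
      rcases hu2U.2 with h | h
      · exact absurd h hu2F
      · exact h
    have hSG12 := hSGprops p hpPs hVpF u2 hu2V u1 hu1V
    exact hu2G (SG_trans hSG12 hu1G)
  have hPunion : propsOf n Ps U1 ∪ propsOf n Ps U2 ⊆ propsOf n Ps D :=
    Set.union_subset (propsOf_mono Set.inter_subset_left) (propsOf_mono Set.inter_subset_left)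
  have hDcirc := circuit_card hME hMI hD
  set f := (propsOf n Ps F ∩ propsOf n Ps D).ncard with hf
  have hIE1 := Set.ncard_inter_add_ncard_union U1 U2 (Set.toFinite _) (Set.toFinite _)
  have hIE2 := Set.ncard_inter_add_ncard_union (propsOf n Ps U1) (propsOf n Ps U2)
    (Set.toFinite _) (Set.toFinite _)
  have hc1 : (U1 ∩ U2).ncard = (D ∩ F).ncard := by rw [hU1U2inter]
  have hc2 : (U1 ∪ U2).ncard = D.ncard := by rw [hU1U2union]
  have hc3 : (propsOf n Ps U1 ∩ propsOf n Ps U2).ncard ≤ f :=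
    Set.ncard_le_ncard hPint (Set.toFinite _)
  have hc4 : (propsOf n Ps U1 ∪ propsOf n Ps U2).ncard ≤ (propsOf n Ps D).ncard :=
    Set.ncard_le_ncard hPunion (Set.toFinite _)
  have hcount1 : (D ∩ F).ncard + 1 ≤ f := by omega
  -- counting (2)
  set J : Set (Fin n) := C' \ {c} with hJ
  have hJss : J ⊂ C' := Set.sdiff_singleton_ssubset.2 hcC'
  have hJindep : ((M✶ ↾ (M.E \ F))✶).Indep J := by
    have hnd := hC''.2 J hJss
    by_contra hni
    refine hnd (dep_iff.2 ⟨hni, ?_⟩)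
    rw [dual_ground, restrict_ground_eq]
    exact (Set.diff_subset).trans hC'X
  obtain ⟨hJX, Bf0, hBf0, hJBf0⟩ := con_indep_extend hME hMI hFE' hJindep
  have hJI : M.Indep (J ∪ I) := by
    refine basis_transfer hME hMI hBf0 hIbasis ?_ hJBf0
    rw [Set.disjoint_left]
    exact fun z hz => (hJX hz).2
  have hJIle := (hMI (J ∪ I)).1 hJI (J ∪ I) (le_refl _)
  have hJIcard : (J ∪ I).ncard = J.ncard + I.ncard := by
    refine Set.ncard_union_eq ?_ (Set.toFinite _) (Set.toFinite _)
    rw [Set.disjoint_left]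
    exact fun z hz hzI => (hJX hz).2 (hIF hzI)
  have hJcard : J.ncard = C'.ncard - 1 := by
    rw [hJ, Set.ncard_diff_singleton_of_mem hcC']
  have hC'pos : 1 ≤ C'.ncard := (Set.ncard_pos (Set.toFinite _)).2 ⟨c, hcC'⟩
  have hPsubJI : propsOf n Ps (J ∪ I) ⊆ propsOf n Ps D ∪ propsOf n Ps F := by
    rw [propsOf_union_eq]
    apply Set.union_subset
    · exact fun p hp => Or.inl (propsOf_mono ((Set.diff_subset).trans hC'D) hp)
    · exact fun p hp => Or.inr (propsOf_mono hIF hp)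
  have hIE3 := Set.ncard_inter_add_ncard_union (propsOf n Ps F) (propsOf n Ps D)
    (Set.toFinite _) (Set.toFinite _)
  have hc5 : (propsOf n Ps (J ∪ I)).ncard
      ≤ (propsOf n Ps D ∪ propsOf n Ps F).ncard :=
    Set.ncard_le_ncard hPsubJI (Set.toFinite _)
  have hc6 : (propsOf n Ps D ∪ propsOf n Ps F).ncard
      = (propsOf n Ps F ∪ propsOf n Ps D).ncard := by rw [Set.union_comm]
  have hDsplit : D.ncard = (D ∩ F).ncard + C'.ncard := by
    rw [← hDdiff]
    have : D = (D ∩ F) ∪ (D \ F) := by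
      rw [Set.inter_union_diff]
    rw [← Set.ncard_inter_add_ncard_diff_eq_ncard D F (Set.toFinite _)]
  omega
end
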